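/- arXiv:2602.16208 — 6 statements merged into one kernel-verified Lean document; each statement's English description precedes it below -/
import Mathlib

section
/- If f belongs to the class S*_B, then the second Taylor coefficient of f satisfies |a_2| ≤ 1. -/
open Complex Metric

/-- The `n`-th Taylor coefficient of `f` at `0`. -/
noncomputable def taylorCoeff (f : ℂ → ℂ) (n : ℕ) : ℂ :=
  iteratedDeriv n f 0 / n.factorial

/-- Membership in the class `S*_B`: `f` is analytic on the unit disk, normalized by
`f(0) = 0` and `f'(0) = 1`, and there is a Schwarz function `w` with
`z f'(z) (1 - log(1 + w z)) = f z` on the unit disk. -/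
def IsSB (f : ℂ → ℂ) : Prop :=
  DifferentiableOn ℂ f (ball (0:ℂ) 1) ∧ f 0 = 0 ∧ deriv f 0 = 1 ∧
  ∃ w : ℂ → ℂ, DifferentiableOn ℂ w (ball (0:ℂ) 1) ∧ w 0 = 0 ∧
    (∀ z ∈ ball (0:ℂ) 1, ‖w z‖ < 1) ∧
    (∀ z ∈ ball (0:ℂ) 1, z * deriv f z * (1 - Complex.log (1 + w z)) = f z)
theorem abs_a2_le_one (f : ℂ → ℂ) (hf : IsSB f) :
    ‖taylorCoeff f 2‖ ≤ 1 := by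
  obtain ⟨hfd, hf0, hf1, w, hwd, hw0, hwlt, heq⟩ := hf
  set B : Set ℂ := ball (0:ℂ) 1 with hB
  have hBo : IsOpen B := isOpen_ball
  have h0B : (0:ℂ) ∈ B := by simp [hB]
  -- analyticity
  have hfa : AnalyticOnNhd ℂ f B := hfd.analyticOnNhd hBo
  have hwa : AnalyticOnNhd ℂ w B := hwd.analyticOnNhd hBo
  have hfa' : AnalyticOnNhd ℂ (deriv f) B := hfa.deriv
  have hfa'' : AnalyticOnNhd ℂ (deriv (deriv f)) B := hfa'.deriv
  have hwa' : AnalyticOnNhd ℂ (deriv w) B := hwa.deriv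
  -- slit plane
  have hslit : ∀ z ∈ B, (1 + w z) ∈ Complex.slitPlane := by
    intro z hz
    apply Complex.mem_slitPlane_of_norm_lt_one
    simpa using hwlt z hz
  have hne : ∀ z ∈ B, (1 + w z) ≠ 0 := fun z hz =>
    Complex.slitPlane_ne_zero (hslit z hz)
  -- notation
  set H : ℂ → ℂ := fun z => 1 - Complex.log (1 + w z) with hH
  set D : ℂ → ℂ := fun z =>
    (deriv f z + z * deriv (deriv f) z) * H z
      - z * deriv f z * (deriv w z / (1 + w z)) with hD
  have hHderiv : ∀ z ∈ B, HasDerivAt H (-(deriv w z / (1 + w z))) z := by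
    intro z hz
    have hw : HasDerivAt w (deriv w z) z :=
      ((hwa z hz).differentiableAt).hasDerivAt
    have h1 : HasDerivAt (fun t => 1 + w t) (deriv w z) z := by
      exact hw.const_add 1
    have hlog : HasDerivAt (fun t => Complex.log (1 + w t))
        (deriv w z / (1 + w z)) z := h1.clog (hslit z hz)
    exact hlog.const_sub 1
  have hLderiv : ∀ z ∈ B, HasDerivAt (fun t => t * deriv f t * H t) (D z) z := by
    intro z hz
    have hf' : HasDerivAt (deriv f) (deriv (deriv f) z) z :=
      ((hfa' z hz).differentiableAt).hasDerivAt
    have hzf : HasDerivAt (fun t => t * deriv f t)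
        (1 * deriv f z + z * deriv (deriv f) z) z :=
      (hasDerivAt_id z).mul hf'
    have := hzf.mul (hHderiv z hz)
    refine this.congr_deriv ?_
    rw [hD]
    ring
  -- deriv f = D on B
  have hderiv_eq : ∀ z ∈ B, deriv f z = D z := by
    intro z hz
    have hev : (fun t => t * deriv f t * H t) =ᶠ[nhds z] f :=
      Filter.eventuallyEq_of_mem (hBo.mem_nhds hz) (fun t ht => heq t ht)
    rw [← hev.deriv_eq]
    exact (hLderiv z hz).deriv
  -- second derivative at 0
  have hev2 : deriv f =ᶠ[nhds 0] D :=
    Filter.eventuallyEq_of_mem (hBo.mem_nhds h0B) hderiv_eq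
  have hkey : deriv (deriv f) 0 = deriv D 0 := hev2.deriv_eq
  -- compute deriv D 0
  set a : ℂ := deriv (deriv f) 0 with ha
  set c : ℂ := deriv w 0 with hc
  have hf'0 : HasDerivAt (deriv f) a 0 := ((hfa' 0 h0B).differentiableAt).hasDerivAt
  have hf''0 : HasDerivAt (deriv (deriv f)) (deriv (deriv (deriv f)) 0) 0 :=
    ((hfa'' 0 h0B).differentiableAt).hasDerivAt
  have hw'0 : HasDerivAt w c 0 := ((hwa 0 h0B).differentiableAt).hasDerivAt
  have hw''0 : HasDerivAt (deriv w) (deriv (deriv w) 0) 0 :=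
    ((hwa' 0 h0B).differentiableAt).hasDerivAt
  have h1w0 : HasDerivAt (fun t => 1 + w t) c 0 := by
    exact hw'0.const_add 1
  have hQ : HasDerivAt (fun t => deriv w t / (1 + w t))
      ((deriv (deriv w) 0 * (1 + w 0) - deriv w 0 * c) / (1 + w 0) ^ 2) 0 :=
    hw''0.div h1w0 (hne 0 h0B)
  have hH0 : HasDerivAt H (-(c / (1 + w 0))) 0 := hHderiv 0 h0B
  have hA : HasDerivAt (fun t => deriv f t + t * deriv (deriv f) t)
      (a + (1 * deriv (deriv f) 0 + 0 * deriv (deriv (deriv f)) 0)) 0 :=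
    hf'0.add ((hasDerivAt_id (0:ℂ)).mul hf''0)
  have hBfun : HasDerivAt (fun t => t * deriv f t)
      (1 * deriv f 0 + 0 * a) 0 := (hasDerivAt_id (0:ℂ)).mul hf'0
  have hDd : HasDerivAt D
      ((a + (1 * deriv (deriv f) 0 + 0 * deriv (deriv (deriv f)) 0)) * H 0
        + (deriv f 0 + 0 * deriv (deriv f) 0) * (-(c / (1 + w 0)))
        - ((1 * deriv f 0 + 0 * a) * (deriv w 0 / (1 + w 0))
          + 0 * deriv f 0 *
            ((deriv (deriv w) 0 * (1 + w 0) - deriv w 0 * c) / (1 + w 0) ^ 2))) 0 :=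
    ((hA.mul hH0).sub (hBfun.mul hQ))
  have hH0val : H 0 = 1 := by simp [hH, hw0]
  have hD0 : deriv D 0 = 2 * a - 2 * c := by
    rw [hDd.deriv]
    simp [hH0val, hw0, hf1, ← hc, ← ha]
    ring
  have hac : a = 2 * c := by
    have : a = 2 * a - 2 * c := hkey.trans hD0
    linear_combination -this
  -- Schwarz
  have hmaps : Set.MapsTo w B B := by
    intro z hz
    simpa [hB] using hwlt z hz
  have hw0' : w 0 = (0:ℂ) := hw0
  have hschwarz : ‖deriv w 0‖ ≤ 1 :=
    Complex.norm_deriv_le_one_of_mapsTo_ball hwd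
      (by rw [hw0']; exact hmaps.mono_right ball_subset_closedBall) one_pos
  have htc : taylorCoeff f 2 = c := by
    have h2 : iteratedDeriv 2 f 0 = a := by
      rw [iteratedDeriv_succ, iteratedDeriv_one]
    rw [taylorCoeff, h2, hac]
    norm_num [Nat.factorial]
  rw [htc]
  exact hschwarz
end

section
/- If f belongs to the class S*_B, then the third Taylor coefficient of f satisfies |a_3| ≤ 3/4. -/
open Complex Metric

open Filter Set Topology

private lemma mobius_lt {a ζ : ℂ} (ha : ‖a‖ < 1) (hζ : ‖ζ‖ < 1) :
    ‖ζ - a‖ < ‖1 - (starRingEnd ℂ) a * ζ‖ := by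
  have hsq : Complex.normSq (1 - (starRingEnd ℂ) a * ζ) - Complex.normSq (ζ - a)
      = (1 - Complex.normSq a) * (1 - Complex.normSq ζ) := by
    simp only [Complex.normSq_apply, Complex.sub_re, Complex.sub_im, Complex.mul_re,
      Complex.mul_im, Complex.one_re, Complex.one_im, Complex.conj_re, Complex.conj_im]
    ring
  have ha2 : Complex.normSq a < 1 := by
    rw [← Complex.sq_norm]; nlinarith [norm_nonneg a]
  have hζ2 : Complex.normSq ζ < 1 := by
    rw [← Complex.sq_norm]; nlinarith [norm_nonneg ζ]
  have hlt : Complex.normSq (ζ - a) < Complex.normSq (1 - (starRingEnd ℂ) a * ζ) := by nlinarith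
  rw [Complex.norm_def, Complex.norm_def]
  exact Real.sqrt_lt_sqrt (Complex.normSq_nonneg _) hlt

private lemma schwarz_pick_zero {u : ℂ → ℂ} (hu : DifferentiableOn ℂ u (ball (0:ℂ) 1))
    (hlt : ∀ z ∈ ball (0:ℂ) 1, ‖u z‖ < 1) :
    ‖deriv u 0‖ ≤ 1 - ‖u 0‖ ^ 2 := by
  have h0 : (0:ℂ) ∈ ball (0:ℂ) 1 := mem_ball_self one_pos
  set a := u 0 with ha_def
  have ha : ‖a‖ < 1 := hlt 0 h0
  have ha2 : Complex.normSq a < 1 := by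
    rw [← Complex.sq_norm]; nlinarith [norm_nonneg a]
  have hden : ∀ z ∈ ball (0:ℂ) 1, 1 - (starRingEnd ℂ) a * u z ≠ 0 := by
    intro z hz h
    have h1 : (starRingEnd ℂ) a * u z = 1 := by linear_combination -h
    have h2 := congrArg (‖·‖) h1
    rw [norm_mul, norm_one, Complex.norm_conj] at h2
    nlinarith [hlt z hz, norm_nonneg (u z), norm_nonneg a]
  set χ : ℂ → ℂ := fun z => (u z - a) / (1 - (starRingEnd ℂ) a * u z) with hχ_def
  have hudiff : ∀ z ∈ ball (0:ℂ) 1, DifferentiableAt ℂ u z := fun z hz =>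
    hu.differentiableAt (isOpen_ball.mem_nhds hz)
  have hχd : DifferentiableOn ℂ χ (ball (0:ℂ) 1) := fun z hz =>
    (((hudiff z hz).sub_const a).div (((hudiff z hz).const_mul _).const_sub 1)
      (hden z hz)).differentiableWithinAt
  have hχ0 : χ 0 = 0 := by simp [hχ_def, ha_def]
  have hmaps : MapsTo χ (ball (0:ℂ) 1) (ball (χ 0) 1) := by
    intro z hz
    rw [hχ0, mem_ball_zero_iff, hχ_def]
    simp only [norm_div]
    exact div_lt_one (norm_pos_iff.mpr (hden z hz)) |>.2 (mobius_lt ha (hlt z hz))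
  have hsch := Complex.norm_deriv_le_div_of_mapsTo_ball hχd (hmaps.mono_right ball_subset_closedBall) one_pos
  have hu0 : HasDerivAt u (deriv u 0) 0 := (hudiff 0 h0).hasDerivAt
  have hχder : HasDerivAt χ ((deriv u 0 * (1 - (starRingEnd ℂ) a * u 0) - (u 0 - a) *
      (-((starRingEnd ℂ) a * deriv u 0))) / (1 - (starRingEnd ℂ) a * u 0) ^ 2) 0 :=
    (hu0.sub_const a).div ((hu0.const_mul _).const_sub 1) (hden 0 h0)
  have hD := hden 0 h0
  have hval : deriv χ 0 = deriv u 0 / (1 - (starRingEnd ℂ) a * a) := by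
    rw [hχder.deriv, ← ha_def]
    rw [← ha_def] at hD
    field_simp
    ring
  have hDval : (1 : ℂ) - (starRingEnd ℂ) a * a = ((1 - Complex.normSq a : ℝ) : ℂ) := by
    rw [mul_comm, Complex.mul_conj]; push_cast; ring
  have habsD : ‖1 - (starRingEnd ℂ) a * a‖ = 1 - Complex.normSq a := by
    rw [hDval, Complex.norm_real, Real.norm_eq_abs, abs_of_pos]; linarith
  rw [hval, norm_div, habsD] at hsch
  norm_num at hsch
  rw [Complex.sq_norm]
  have := (div_le_one (by linarith : (0:ℝ) < 1 - Complex.normSq a)).1 hsch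
  linarith
private lemma eps_limit {s t : ℝ} (h : ∀ ε : ℝ, ε ∈ Set.Ioo (0:ℝ) 1 → (1-ε)*s ≤ 1 - ((1-ε)*t)^2) :
    s ≤ 1 - t^2 := by
  have h1 : Tendsto (fun ε : ℝ => (1-ε)*s) (𝓝[>] (0:ℝ)) (𝓝 ((1-0)*s)) :=
    (((continuous_const.sub continuous_id).mul continuous_const).tendsto 0).mono_left
      nhdsWithin_le_nhds
  have h2 : Tendsto (fun ε : ℝ => 1 - ((1-ε)*t)^2) (𝓝[>] (0:ℝ)) (𝓝 (1 - ((1-0)*t)^2)) :=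
    ((continuous_const.sub ((((continuous_const.sub continuous_id).mul
      continuous_const)).pow 2)).tendsto 0).mono_left nhdsWithin_le_nhds
  have hev : ∀ᶠ ε in 𝓝[>] (0:ℝ), (1-ε)*s ≤ 1 - ((1-ε)*t)^2 :=
    Filter.eventually_of_mem (Ioo_mem_nhdsGT_of_mem ⟨le_refl 0, one_pos⟩) h
  have := le_of_tendsto_of_tendsto h1 h2 hev
  simpa using this

private lemma schwarz_coeffs {w : ℂ → ℂ} (hwd : DifferentiableOn ℂ w (ball (0:ℂ) 1))
    (hw0 : w 0 = 0) (hwlt : ∀ z ∈ ball (0:ℂ) 1, ‖w z‖ < 1) :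
    ‖deriv w 0‖ ≤ 1 ∧
      ‖deriv (deriv w) 0‖ ≤ 2 * (1 - ‖deriv w 0‖ ^ 2) := by
  have h0 : (0:ℂ) ∈ ball (0:ℂ) 1 := mem_ball_self one_pos
  set ψ : ℂ → ℂ := dslope w 0 with hψ_def
  have hmaps : MapsTo w (ball (0:ℂ) 1) (ball (w 0) 1) := by
    intro z hz
    rw [hw0, mem_ball_zero_iff]
    exact hwlt z hz
  have hψb : ∀ z ∈ ball (0:ℂ) 1, ‖ψ z‖ ≤ 1 := by
    intro z hz
    have := Complex.norm_dslope_le_div_of_mapsTo_ball hwd (hmaps.mono_right ball_subset_closedBall) hz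
    simpa using this
  have hψ0 : ψ 0 = deriv w 0 := dslope_same w 0
  obtain ⟨p, hp⟩ := (hwd.analyticOnNhd isOpen_ball) 0 h0
  have haψ : AnalyticAt ℂ ψ 0 := ⟨_, hp.has_fpower_series_dslope_fslope⟩
  have hψd : DifferentiableOn ℂ ψ (ball (0:ℂ) 1) := by
    intro z hz
    rcases eq_or_ne z 0 with rfl | hne
    · exact haψ.differentiableAt.differentiableWithinAt
    · exact ((differentiableAt_dslope_of_ne hne).2
        (hwd.differentiableAt (isOpen_ball.mem_nhds hz))).differentiableWithinAt
  have hc1 : ‖deriv w 0‖ ≤ 1 := by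
    rw [← hψ0]; exact hψb 0 h0
  -- Schwarz–Pick with shrinking
  have key : ‖deriv ψ 0‖ ≤ 1 - ‖ψ 0‖ ^ 2 := by
    refine eps_limit (fun ε hε => ?_)
    have hε1 : (0:ℝ) < 1 - ε := by linarith [hε.2]
    set u : ℂ → ℂ := fun z => ((1 - ε : ℝ) : ℂ) * ψ z with hu_def
    have hud : DifferentiableOn ℂ u (ball (0:ℂ) 1) :=
      (differentiableOn_const _).mul hψd
    have hult : ∀ z ∈ ball (0:ℂ) 1, ‖u z‖ < 1 := by
      intro z hz
      rw [hu_def]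
      simp only [norm_mul, Complex.norm_real, Real.norm_eq_abs]
      rw [abs_of_pos hε1]
      nlinarith [hψb z hz, norm_nonneg (ψ z), hε.1]
    have hsp := schwarz_pick_zero hud hult
    have hdu : deriv u 0 = ((1 - ε : ℝ) : ℂ) * deriv ψ 0 :=
      deriv_const_mul _ haψ.differentiableAt
    have hu0 : u 0 = ((1 - ε : ℝ) : ℂ) * ψ 0 := rfl
    rw [hdu, hu0, norm_mul, norm_mul, Complex.norm_real, Real.norm_eq_abs, abs_of_pos hε1] at hsp
    exact hsp
  constructor
  · exact hc1
  · -- deriv (deriv w) 0 = 2 * deriv ψ 0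
    have hww : w = fun y => y * ψ y := by
      funext y
      have := sub_smul_dslope w 0 y
      rw [sub_zero, hw0, sub_zero, smul_eq_mul] at this
      exact this.symm
    have hψa : AnalyticOnNhd ℂ ψ (ball (0:ℂ) 1) := hψd.analyticOnNhd isOpen_ball
    have hderivw : ∀ z ∈ ball (0:ℂ) 1, deriv w z = 1 * ψ z + z * deriv ψ z := by
      intro z hz
      have hψz : HasDerivAt ψ (deriv ψ z) z := ((hψa z hz).differentiableAt).hasDerivAt
      have : HasDerivAt (fun y => y * ψ y) (1 * ψ z + z * deriv ψ z) z :=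
        (hasDerivAt_id' (x := z)).mul hψz
      rw [hww]
      exact this.deriv
    have hev : deriv w =ᶠ[𝓝 (0:ℂ)] fun z => 1 * ψ z + z * deriv ψ z :=
      Filter.eventuallyEq_of_mem (isOpen_ball.mem_nhds h0) hderivw
    have hdψa : DifferentiableAt ℂ (deriv ψ) 0 := ((hψa.deriv) 0 h0).differentiableAt
    have hrhs : HasDerivAt (fun z => 1 * ψ z + z * deriv ψ z)
        (1 * deriv ψ 0 + (1 * deriv ψ 0 + 0 * deriv (deriv ψ) 0)) 0 :=
      ((haψ.differentiableAt.hasDerivAt).const_mul 1).add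
        ((hasDerivAt_id' (x := (0:ℂ))).mul hdψa.hasDerivAt)
    have h2 : deriv (deriv w) 0 = 2 * deriv ψ 0 := by
      rw [hev.deriv_eq, hrhs.deriv]; ring
    rw [h2, norm_mul, ← hψ0]
    have : ‖(2 : ℂ)‖ = 2 := by norm_num
    rw [this]
    nlinarith [key]


theorem abs_a3_le (f : ℂ → ℂ) (hf : IsSB f) :
    ‖taylorCoeff f 3‖ ≤ 3 / 4 := by
  obtain ⟨hfd, hf0, hf1, w, hwd, hw0, hwlt, heq⟩ := hf
  have h0 : (0:ℂ) ∈ ball (0:ℂ) 1 := mem_ball_self one_pos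
  have hfa : AnalyticOnNhd ℂ f (ball (0:ℂ) 1) := hfd.analyticOnNhd isOpen_ball
  have hf1a : AnalyticOnNhd ℂ (deriv f) (ball (0:ℂ) 1) := hfa.deriv
  have hf2a : AnalyticOnNhd ℂ (deriv (deriv f)) (ball (0:ℂ) 1) := hf1a.deriv
  have hf3a : AnalyticOnNhd ℂ (deriv (deriv (deriv f))) (ball (0:ℂ) 1) := hf2a.deriv
  have hwa : AnalyticOnNhd ℂ w (ball (0:ℂ) 1) := hwd.analyticOnNhd isOpen_ball
  have hw1a : AnalyticOnNhd ℂ (deriv w) (ball (0:ℂ) 1) := hwa.deriv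
  have hw2a : AnalyticOnNhd ℂ (deriv (deriv w)) (ball (0:ℂ) 1) := hw1a.deriv
  have hsp : ∀ z ∈ ball (0:ℂ) 1, 1 + w z ∈ Complex.slitPlane := fun z hz =>
    Complex.mem_slitPlane_of_norm_lt_one (by simpa using hwlt z hz)
  have hne : ∀ z ∈ ball (0:ℂ) 1, 1 + w z ≠ 0 := fun z hz => Complex.slitPlane_ne_zero (hsp z hz)
  set L : ℂ → ℂ := fun z => Complex.log (1 + w z) with hL_def
  set L1 : ℂ → ℂ := fun z => deriv w z / (1 + w z) with hL1_def
  set L2 : ℂ → ℂ := fun z =>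
    (deriv (deriv w) z * (1 + w z) - deriv w z * deriv w z) / (1 + w z) ^ 2 with hL2_def
  have hwz : ∀ z ∈ ball (0:ℂ) 1, HasDerivAt w (deriv w z) z := fun z hz =>
    ((hwa z hz).differentiableAt).hasDerivAt
  have hLz : ∀ z ∈ ball (0:ℂ) 1, HasDerivAt L (L1 z) z := fun z hz =>
    HasDerivAt.clog ((hwz z hz).const_add 1) (hsp z hz)
  have hL1z : ∀ z ∈ ball (0:ℂ) 1, HasDerivAt L1 (L2 z) z := fun z hz =>
    HasDerivAt.div ((hw1a z hz).differentiableAt.hasDerivAt) ((hwz z hz).const_add 1) (hne z hz)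
  -- first differentiation of the functional equation
  have hG : ∀ z ∈ ball (0:ℂ) 1, HasDerivAt (fun y => y * deriv f y * (1 - L y))
      ((1 * deriv f z + z * deriv (deriv f) z) * (1 - L z) + z * deriv f z * -(L1 z)) z :=
    fun z hz =>
      ((hasDerivAt_id' z).mul ((hf1a z hz).differentiableAt.hasDerivAt)).mul
        ((hLz z hz).const_sub 1)
  have hE1 : ∀ z ∈ ball (0:ℂ) 1,
      (1 * deriv f z + z * deriv (deriv f) z) * (1 - L z) + z * deriv f z * -(L1 z)
        = deriv f z := by
    intro z hz
    have hevf : (fun y => y * deriv f y * (1 - L y)) =ᶠ[𝓝 z] f :=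
      Filter.eventuallyEq_of_mem (isOpen_ball.mem_nhds hz) (fun y hy => heq y hy)
    rw [← (hG z hz).deriv]
    exact hevf.deriv_eq
  -- second differentiation
  have hA1 : ∀ z ∈ ball (0:ℂ) 1, HasDerivAt
      (fun y => (1 * deriv f y + y * deriv (deriv f) y) * (1 - L y) + y * deriv f y * -(L1 y))
      (((1 * deriv (deriv f) z + (1 * deriv (deriv f) z + z * deriv (deriv (deriv f)) z))
          * (1 - L z) + (1 * deriv f z + z * deriv (deriv f) z) * -(L1 z))
        + ((1 * deriv f z + z * deriv (deriv f) z) * -(L1 z) + z * deriv f z * -(L2 z))) z := by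
    intro z hz
    have hd1 : HasDerivAt (deriv f) (deriv (deriv f) z) z := (hf1a z hz).differentiableAt.hasDerivAt
    have hd2 : HasDerivAt (deriv (deriv f)) (deriv (deriv (deriv f)) z) z :=
      (hf2a z hz).differentiableAt.hasDerivAt
    have t1 : HasDerivAt (fun y => 1 * deriv f y + y * deriv (deriv f) y)
        (1 * deriv (deriv f) z + (1 * deriv (deriv f) z + z * deriv (deriv (deriv f)) z)) z :=
      (hd1.const_mul 1).add ((hasDerivAt_id' z).mul hd2)
    have t2 := t1.mul ((hLz z hz).const_sub 1)
    have t3 : HasDerivAt (fun y => y * deriv f y) (1 * deriv f z + z * deriv (deriv f) z) z :=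
      (hasDerivAt_id' z).mul hd1
    have t4 := t3.mul ((hL1z z hz).neg)
    exact t2.add t4
  have hE2 : ∀ z ∈ ball (0:ℂ) 1,
      (((1 * deriv (deriv f) z + (1 * deriv (deriv f) z + z * deriv (deriv (deriv f)) z))
          * (1 - L z) + (1 * deriv f z + z * deriv (deriv f) z) * -(L1 z))
        + ((1 * deriv f z + z * deriv (deriv f) z) * -(L1 z) + z * deriv f z * -(L2 z)))
        = deriv (deriv f) z := by
    intro z hz
    have hev : (fun y => (1 * deriv f y + y * deriv (deriv f) y) * (1 - L y)
        + y * deriv f y * -(L1 y)) =ᶠ[𝓝 z] deriv f :=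
      Filter.eventuallyEq_of_mem (isOpen_ball.mem_nhds hz) (fun y hy => hE1 y hy)
    rw [← (hA1 z hz).deriv]
    exact hev.deriv_eq
  -- third differentiation, at 0 only
  have hd1 : HasDerivAt (deriv f) (deriv (deriv f) 0) 0 := (hf1a 0 h0).differentiableAt.hasDerivAt
  have hd2 : HasDerivAt (deriv (deriv f)) (deriv (deriv (deriv f)) 0) 0 :=
    (hf2a 0 h0).differentiableAt.hasDerivAt
  have hd3 : HasDerivAt (deriv (deriv (deriv f))) (deriv (deriv (deriv (deriv f))) 0) 0 :=
    (hf3a 0 h0).differentiableAt.hasDerivAt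
  have hL2d : DifferentiableAt ℂ L2 0 := by
    apply DifferentiableAt.div
    · exact ((hw2a 0 h0).differentiableAt.mul ((hwa 0 h0).differentiableAt.const_add 1)).sub
        ((hw1a 0 h0).differentiableAt.mul (hw1a 0 h0).differentiableAt)
    · exact ((hwa 0 h0).differentiableAt.const_add 1).pow 2
    · exact pow_ne_zero 2 (hne 0 h0)
  have s1 : HasDerivAt (fun y => 1 * deriv (deriv f) y + (1 * deriv (deriv f) y
      + y * deriv (deriv (deriv f)) y))
      (1 * deriv (deriv (deriv f)) 0 + (1 * deriv (deriv (deriv f)) 0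
        + (1 * deriv (deriv (deriv f)) 0 + 0 * deriv (deriv (deriv (deriv f))) 0))) 0 :=
    (hd2.const_mul 1).add ((hd2.const_mul 1).add ((hasDerivAt_id' (0:ℂ)).mul hd3))
  have s2 := s1.mul ((hLz 0 h0).const_sub 1)
  have s3 : HasDerivAt (fun y => 1 * deriv f y + y * deriv (deriv f) y)
      (1 * deriv (deriv f) 0 + (1 * deriv (deriv f) 0 + 0 * deriv (deriv (deriv f)) 0)) 0 :=
    (hd1.const_mul 1).add ((hasDerivAt_id' (0:ℂ)).mul hd2)
  have s4 := s3.mul ((hL1z 0 h0).neg)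
  have s5 : HasDerivAt (fun y => y * deriv f y) (1 * deriv f 0 + 0 * deriv (deriv f) 0) 0 :=
    (hasDerivAt_id' (0:ℂ)).mul hd1
  have s6 := s5.mul (hL2d.hasDerivAt.neg)
  have hA2 := (s2.add s4).add (s4.add s6)
  have hev3 : (fun y => (((1 * deriv (deriv f) y
      + (1 * deriv (deriv f) y + y * deriv (deriv (deriv f)) y)) * (1 - L y)
      + (1 * deriv f y + y * deriv (deriv f) y) * -(L1 y))
      + ((1 * deriv f y + y * deriv (deriv f) y) * -(L1 y) + y * deriv f y * -(L2 y))))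
      =ᶠ[𝓝 (0:ℂ)] deriv (deriv f) :=
    Filter.eventuallyEq_of_mem (isOpen_ball.mem_nhds h0) (fun y hy => hE2 y hy)
  have hE3 := (hA2.deriv).symm.trans hev3.deriv_eq
  -- values at 0
  have hL0 : L 0 = 0 := by rw [hL_def]; simp [hw0]
  have hL10 : L1 0 = deriv w 0 := by rw [hL1_def]; simp [hw0]
  have hL20 : L2 0 = deriv (deriv w) 0 - deriv w 0 * deriv w 0 := by rw [hL2_def]; simp [hw0]
  have hf2v : deriv (deriv f) 0 = 2 * deriv w 0 := by
    have h := hE2 0 h0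
    rw [hL0, hL10, hf1] at h
    linear_combination h
  have hf3v : 2 * deriv (deriv (deriv f)) 0 = 9 * (deriv w 0)^2 + 3 * deriv (deriv w) 0 := by
    have h := hE3
    simp only [Pi.neg_apply] at h
    rw [hL0, hL10, hL20, hf1, hf2v] at h
    linear_combination h
  have ht : taylorCoeff f 3 = deriv (deriv (deriv f)) 0 / 6 := by
    simp [taylorCoeff, iteratedDeriv_succ, iteratedDeriv_zero]
    norm_num [Nat.factorial]
  have ht2 : taylorCoeff f 3 = (9 * (deriv w 0)^2 + 3 * deriv (deriv w) 0) / 12 := by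
    rw [ht]; linear_combination hf3v / 12
  obtain ⟨hb1, hb2⟩ := schwarz_coeffs hwd hw0 hwlt
  rw [ht2]
  have habs : ‖(9 * (deriv w 0)^2 + 3 * deriv (deriv w) 0) / 12‖
      ≤ (9 * (‖deriv w 0‖)^2 + 3 * ‖deriv (deriv w) 0‖) / 12 := by
    rw [norm_div]
    have h12 : ‖(12 : ℂ)‖ = 12 := by norm_num
    rw [h12]
    have hnum : ‖9 * (deriv w 0)^2 + 3 * deriv (deriv w) 0‖
        ≤ 9 * (‖deriv w 0‖)^2 + 3 * ‖deriv (deriv w) 0‖ := by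
      refine (norm_add_le _ _).trans ?_
      rw [norm_mul, norm_mul, norm_pow]
      norm_num
    linarith [hnum]
  refine habs.trans ?_
  nlinarith [norm_nonneg (deriv w 0), norm_nonneg (deriv (deriv w) 0), hb1, hb2]
end

section
/- If f belongs to the class S*_B, then the fourth Taylor coefficient of f satisfies |a_4| ≤ 19/36. -/
open Complex Metric

open Filter Topology

lemma coeff_step {G : ℂ → ℂ} (hG : ContinuousAt G 0) {c : ℂ}
    (h : ∀ᶠ z in 𝓝[≠] (0:ℂ), c + z * G z = 0) :
    c = 0 ∧ ∀ᶠ z in 𝓝[≠] (0:ℂ), G z = 0 := by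
  have hlim : Tendsto (fun z : ℂ => c + z * G z) (𝓝[≠] 0) (𝓝 c) := by
    have : Tendsto (fun z : ℂ => c + z * G z) (𝓝 0) (𝓝 (c + 0 * G 0)) :=
      tendsto_const_nhds.add (tendsto_id.mul hG.tendsto)
    simpa using this.mono_left nhdsWithin_le_nhds
  have hzero : Tendsto (fun z : ℂ => c + z * G z) (𝓝[≠] 0) (𝓝 0) :=
    Tendsto.congr' (h.mono fun z hz => hz.symm) tendsto_const_nhds
  have hc : c = 0 := tendsto_nhds_unique hlim hzero
  refine ⟨hc, ?_⟩
  filter_upwards [h, self_mem_nhdsWithin] with z hz hz0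
  rw [hc, zero_add] at hz
  exact (mul_eq_zero.mp hz).resolve_left hz0

lemma coeff_ext5 {R : ℂ → ℂ} (hR : ContinuousAt R 0) {b0 b1 b2 b3 b4 : ℂ}
    (h : ∀ᶠ z in 𝓝 (0:ℂ), b0 + b1*z + b2*z^2 + b3*z^3 + b4*z^4 + R z * z^5 = 0) :
    b0 = 0 ∧ b1 = 0 ∧ b2 = 0 ∧ b3 = 0 ∧ b4 = 0 := by
  have hc : ContinuousAt (fun z : ℂ => z) 0 := continuousAt_id
  have h4 : ContinuousAt (fun z : ℂ => b4 + R z * z) 0 := by fun_prop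
  have h3 : ContinuousAt (fun z : ℂ => b3 + b4*z + R z * z^2) 0 := by fun_prop
  have h2 : ContinuousAt (fun z : ℂ => b2 + b3*z + b4*z^2 + R z * z^3) 0 := by fun_prop
  have h1 : ContinuousAt (fun z : ℂ => b1 + b2*z + b3*z^2 + b4*z^3 + R z * z^4) 0 := by fun_prop
  have s0 := coeff_step h1 (c := b0) ?_
  · have s1 := coeff_step h2 (c := b1) ?_
    · have s2 := coeff_step h3 (c := b2) ?_
      · have s3 := coeff_step h4 (c := b3) ?_
        · have s4 := coeff_step hR (c := b4) ?_
          · exact ⟨s0.1, s1.1, s2.1, s3.1, s4.1⟩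
          · filter_upwards [s3.2] with z hz; linear_combination hz
        · filter_upwards [s2.2] with z hz; linear_combination hz
      · filter_upwards [s1.2] with z hz; linear_combination hz
    · filter_upwards [s0.2] with z hz; linear_combination hz
  · filter_upwards [h.filter_mono nhdsWithin_le_nhds] with z hz
    linear_combination hz

lemma taylorCoeff_eq_coeff {F : ℂ → ℂ} {p : FormalMultilinearSeries ℂ ℂ ℂ}
    (hF : HasFPowerSeriesAt F p 0) (n : ℕ) :
    (iteratedDeriv n F 0) / n.factorial = p.coeff n := by
  obtain ⟨r, hr⟩ := hF
  have h := hr.factorial_smul (1:ℂ) n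
  rw [iteratedDeriv_eq_iteratedFDeriv, ← h]
  simp only [nsmul_eq_mul, FormalMultilinearSeries.coeff]
  rw [mul_div_cancel_left₀ _ (by exact_mod_cast Nat.factorial_ne_zero n : (n.factorial:ℂ) ≠ 0)]
  rfl

lemma taylorCoeff_eq_coeff' {F : ℂ → ℂ} {p : FormalMultilinearSeries ℂ ℂ ℂ}
    (hF : HasFPowerSeriesAt F p 0) (n : ℕ) : taylorCoeff F n = p.coeff n :=
  taylorCoeff_eq_coeff hF n

lemma taylorCoeff_zero_eq {F : ℂ → ℂ} : taylorCoeff F 0 = F 0 := by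
  simp [taylorCoeff, iteratedDeriv_zero]

lemma taylorCoeff_one_eq {F : ℂ → ℂ} : taylorCoeff F 1 = deriv F 0 := by
  simp [taylorCoeff, iteratedDeriv_one]

lemma taylorCoeff_deriv (F : ℂ → ℂ) (k : ℕ) :
    taylorCoeff (deriv F) k = (k+1) * taylorCoeff F (k+1) := by
  unfold taylorCoeff
  rw [iteratedDeriv_succ', Nat.factorial_succ]
  have hk : ((k:ℂ)+1) ≠ 0 := Nat.cast_add_one_ne_zero k
  have hf : ((k.factorial : ℂ)) ≠ 0 := by exact_mod_cast Nat.factorial_ne_zero k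
  push_cast
  field_simp

lemma expand5 {F : ℂ → ℂ} (hF : AnalyticAt ℂ F 0) :
    ∃ R : ℂ → ℂ, ContinuousAt R 0 ∧ ∀ z, F z = taylorCoeff F 0 + taylorCoeff F 1 * z
      + taylorCoeff F 2 * z^2 + taylorCoeff F 3 * z^3 + taylorCoeff F 4 * z^4 + R z * z^5 := by
  obtain ⟨p, hp⟩ := hF
  set F1 : ℂ → ℂ := dslope F 0 with hF1
  set F2 : ℂ → ℂ := dslope F1 0 with hF2
  set F3 : ℂ → ℂ := dslope F2 0 with hF3
  set F4 : ℂ → ℂ := dslope F3 0 with hF4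
  set F5 : ℂ → ℂ := dslope F4 0 with hF5
  have h1 : HasFPowerSeriesAt F1 p.fslope 0 := hp.has_fpower_series_dslope_fslope
  have h2 : HasFPowerSeriesAt F2 p.fslope.fslope 0 := h1.has_fpower_series_dslope_fslope
  have h3 : HasFPowerSeriesAt F3 p.fslope.fslope.fslope 0 := h2.has_fpower_series_dslope_fslope
  have h4 : HasFPowerSeriesAt F4 p.fslope.fslope.fslope.fslope 0 :=
    h3.has_fpower_series_dslope_fslope
  have h5 : HasFPowerSeriesAt F5 p.fslope.fslope.fslope.fslope.fslope 0 :=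
    h4.has_fpower_series_dslope_fslope
  have key : ∀ (G G' : ℂ → ℂ), G' = dslope G 0 → ∀ z, G z = G 0 + z * G' z := by
    intro G G' hG' z
    have := sub_smul_dslope G 0 z
    rw [← hG'] at this
    simp only [sub_zero, smul_eq_mul] at this
    linear_combination -this
  have e0 := key F F1 hF1
  have e1 := key F1 F2 hF2
  have e2 := key F2 F3 hF3
  have e3 := key F3 F4 hF4
  have e4 := key F4 F5 hF5
  have v0 : taylorCoeff F 0 = F 0 := taylorCoeff_zero_eq
  have v1 : taylorCoeff F 1 = F1 0 := by
    rw [taylorCoeff_eq_coeff' hp 1, ← h1.coeff_zero fun _ => 1]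
    exact (FormalMultilinearSeries.coeff_fslope (p := p) (n := 0)).symm
  have v2 : taylorCoeff F 2 = F2 0 := by
    rw [taylorCoeff_eq_coeff' hp 2, ← h2.coeff_zero fun _ => 1]
    exact ((FormalMultilinearSeries.coeff_fslope (p := p.fslope) (n := 0)).trans
      (FormalMultilinearSeries.coeff_fslope (p := p) (n := 1))).symm
  have v3 : taylorCoeff F 3 = F3 0 := by
    rw [taylorCoeff_eq_coeff' hp 3, ← h3.coeff_zero fun _ => 1]
    exact ((FormalMultilinearSeries.coeff_fslope (p := p.fslope.fslope) (n := 0)).trans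
      ((FormalMultilinearSeries.coeff_fslope (p := p.fslope) (n := 1)).trans
      (FormalMultilinearSeries.coeff_fslope (p := p) (n := 2)))).symm
  have v4 : taylorCoeff F 4 = F4 0 := by
    rw [taylorCoeff_eq_coeff' hp 4, ← h4.coeff_zero fun _ => 1]
    exact ((FormalMultilinearSeries.coeff_fslope (p := p.fslope.fslope.fslope) (n := 0)).trans
      ((FormalMultilinearSeries.coeff_fslope (p := p.fslope.fslope) (n := 1)).trans
      ((FormalMultilinearSeries.coeff_fslope (p := p.fslope) (n := 2)).trans
      (FormalMultilinearSeries.coeff_fslope (p := p) (n := 3))))).symm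
  refine ⟨F5, h5.continuousAt, fun z => ?_⟩
  rw [v0, v1, v2, v3, v4, e0 z, e1 z, e2 z, e3 z, e4 z]
  ring

lemma taylorCoeff_eqs {F : ℂ → ℂ} (hF : AnalyticAt ℂ F 0) {R : ℂ → ℂ} (hR : ContinuousAt R 0)
    {b0 b1 b2 b3 b4 : ℂ}
    (h : ∀ᶠ z in 𝓝 (0:ℂ), F z = b0 + b1*z + b2*z^2 + b3*z^3 + b4*z^4 + R z * z^5) :
    taylorCoeff F 0 = b0 ∧ taylorCoeff F 1 = b1 ∧ taylorCoeff F 2 = b2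
      ∧ taylorCoeff F 3 = b3 ∧ taylorCoeff F 4 = b4 := by
  obtain ⟨R', hR', hexp⟩ := expand5 hF
  have hcont : ContinuousAt (fun z => R' z - R z) 0 := hR'.sub hR
  have hkey := coeff_ext5 hcont (b0 := taylorCoeff F 0 - b0) (b1 := taylorCoeff F 1 - b1)
    (b2 := taylorCoeff F 2 - b2) (b3 := taylorCoeff F 3 - b3) (b4 := taylorCoeff F 4 - b4) ?_
  · exact ⟨by linear_combination hkey.1, by linear_combination hkey.2.1,
      by linear_combination hkey.2.2.1, by linear_combination hkey.2.2.2.1,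
      by linear_combination hkey.2.2.2.2⟩
  · filter_upwards [h] with z hz
    linear_combination hz - hexp z

set_option maxHeartbeats 1000000 in
lemma Haux (x t : ℝ) (hx0 : 0 ≤ x) (hx1 : x ≤ 1) (ht0 : 0 ≤ t) (ht1 : t ≤ 1) :
    (5*t*(1-x) - (95/12)*x)^2 ≤ (76/3) * ((t*(1-x))^2 + t*(1/12)*(1-x)*(14-37*x) + (49+217*x+361*x^2)/144) := by
  nlinarith [sq_nonneg (t*(1-x)), mul_nonneg ht0 (sq_nonneg (1-x)), sq_nonneg (t-x), sq_nonneg (t*x-x), sq_nonneg (x - t*x), mul_nonneg (mul_nonneg hx0 ht0) (sq_nonneg (1-x)), sq_nonneg (1-x), mul_nonneg hx0 ht0, sq_nonneg (t - 1), mul_nonneg (mul_nonneg hx0 hx0) ht0]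

set_option maxHeartbeats 1000000 in
lemma Hnonneg (x t p : ℝ) (hx0 : 0 ≤ x) (hx1 : x ≤ 1) (ht0 : 0 ≤ t) (ht1 : t ≤ 1) :
    0 ≤ (49:ℝ)/144 + (19/3)*p^2 + (7/6)*t + 5*t*p + t^2 + (217/144)*x - (95/12)*x*p
      - (17/4)*x*t - 5*x*t*p - 2*x*t^2 + (361/144)*x^2 + (37/12)*x^2*t + x^2*t^2 := by
  have h := Haux x t hx0 hx1 ht0 ht1
  nlinarith [sq_nonneg ((38/3)*p + (5*t*(1-x) - (95/12)*x)), h]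

set_option maxHeartbeats 2000000 in
lemma psi_bound (c1 c2 c3 d1 d2 : ℂ)
    (hd1 : ‖d1‖ ≤ 1)
    (hd2 : ‖d2‖ ≤ 1 - ‖d1‖ ^ 2)
    (hc1 : ‖c1‖ ≤ 1)
    (hc2 : c2 = d1 * (1 - (Complex.normSq c1 : ℂ)))
    (hc3 : c3 = d2 * (1 - (Complex.normSq c1 : ℂ)) - d1 * (starRingEnd ℂ c1) * c2) :
    ‖c3 + (5/2)*c1*c2 + (19/12)*c1^3‖ ≤ 19/12 := by
  set x : ℝ := Complex.normSq c1 with hxdef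
  set t : ℝ := Complex.normSq d1 with htdef
  set ρ : ℝ := (d1 * ((starRingEnd ℂ) c1 * (starRingEnd ℂ) c1)).re with hrdef
  have hx0 : 0 ≤ x := Complex.normSq_nonneg _
  have ht0 : 0 ≤ t := Complex.normSq_nonneg _
  have hx1 : x ≤ 1 := by
    have h := Complex.sq_norm c1; rw [← hxdef] at h; nlinarith [norm_nonneg c1]
  have ht1 : t ≤ 1 := by
    have h := Complex.sq_norm d1; rw [← htdef] at h; nlinarith [norm_nonneg d1]
  set W : ℂ := ((1 - x : ℝ):ℂ)*(-(d1*d1) * (starRingEnd ℂ c1) + ((5/2:ℝ):ℂ)*c1*d1)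
      + ((19/12:ℝ):ℂ)*(c1*c1*c1) with hWdef
  have hΨ : c3 + (5/2)*c1*c2 + (19/12)*c1^3 = d2 * ((1 - x :ℝ):ℂ) + W := by
    rw [hWdef, hc3, hc2]
    simp only [Complex.ofReal_sub, Complex.ofReal_div, Complex.ofReal_one, Complex.ofReal_ofNat]
    ring
  have habs1 : ‖c3 + (5/2)*c1*c2 + (19/12)*c1^3‖
      ≤ ‖d2‖ * (1 - x) + ‖W‖ := by
    rw [hΨ]
    refine (norm_add_le _ _).trans ?_
    rw [norm_mul, Complex.norm_real, Real.norm_eq_abs, _root_.abs_of_nonneg (by linarith : (0:ℝ) ≤ 1 - x)]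
  have hW2 : ‖W‖ ^ 2 = (1-x)^2*t^2*x + (25/4)*(1-x)^2*t*x + (361/144)*x^3
      - 5*(1-x)^2*t*ρ + (95/12)*(1-x)*x*ρ - (19/6)*(1-x)*(2*ρ^2 - t*x^2) := by
    rw [Complex.sq_norm, hWdef, hxdef, htdef, hrdef]
    simp only [Complex.normSq_apply, Complex.mul_re, Complex.mul_im, Complex.add_re,
      Complex.add_im, Complex.sub_re, Complex.sub_im, Complex.ofReal_re, Complex.ofReal_im,
      Complex.conj_re, Complex.conj_im, Complex.neg_re, Complex.neg_im]
    ring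
  have hRpos : (0:ℝ) ≤ 19/12 - (1-t)*(1-x) := by nlinarith
  have hWb : ‖W‖ ≤ 19/12 - (1-t)*(1-x) := by
    have hH := Hnonneg x t ρ hx0 hx1 ht0 ht1
    have hprod : (0:ℝ) ≤ (1-x) * ((49:ℝ)/144 + (19/3)*ρ^2 + (7/6)*t + 5*t*ρ + t^2 + (217/144)*x - (95/12)*x*ρ
      - (17/4)*x*t - 5*x*t*ρ - 2*x*t^2 + (361/144)*x^2 + (37/12)*x^2*t + x^2*t^2) :=
      mul_nonneg (by linarith) hH
    nlinarith [norm_nonneg W, hW2, hprod]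
  have hd2' : ‖d2‖ ≤ 1 - t := by
    rw [Complex.sq_norm d1] at hd2; exact hd2
  have h1x : (0:ℝ) ≤ 1 - x := by linarith
  calc ‖c3 + (5/2)*c1*c2 + (19/12)*c1^3‖
      ≤ ‖d2‖ * (1 - x) + ‖W‖ := habs1
    _ ≤ (1-t)*(1-x) + (19/12 - (1-t)*(1-x)) :=
        add_le_add (mul_le_mul_of_nonneg_right hd2' h1x) hWb
    _ = 19/12 := by ring

lemma normSq_mobius (u v : ℂ) :
    Complex.normSq (1 - (starRingEnd ℂ v) * u) - Complex.normSq (u - v)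
      = (1 - Complex.normSq u) * (1 - Complex.normSq v) := by
  simp only [Complex.normSq_apply, Complex.sub_re, Complex.sub_im, Complex.mul_re, Complex.mul_im,
    Complex.one_re, Complex.one_im, Complex.conj_re, Complex.conj_im]
  ring

lemma mobius_denom_ne {u v : ℂ} (hu : ‖u‖ < 1) (hv : ‖v‖ < 1) :
    1 - (starRingEnd ℂ v) * u ≠ 0 := by
  intro h
  have h1 : (starRingEnd ℂ v) * u = 1 := by linear_combination -h
  have h2 : ‖(starRingEnd ℂ v) * u‖ = 1 := by rw [h1]; simp
  rw [norm_mul, Complex.norm_conj] at h2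
  nlinarith [norm_nonneg u, norm_nonneg v]

lemma mobius_abs_lt {u v : ℂ} (hu : ‖u‖ < 1) (hv : ‖v‖ < 1) :
    ‖(u - v) / (1 - (starRingEnd ℂ v) * u)‖ < 1 := by
  rw [norm_div, div_lt_one (norm_pos_iff.mpr (mobius_denom_ne hu hv))]
  have hkey := normSq_mobius u v
  have h1 : Complex.normSq u < 1 := by
    rw [← Complex.sq_norm]; nlinarith [norm_nonneg u]
  have h2 : Complex.normSq v < 1 := by
    rw [← Complex.sq_norm]; nlinarith [norm_nonneg v]
  have h3 : Complex.normSq (u - v) < Complex.normSq (1 - (starRingEnd ℂ v) * u) := by nlinarith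
  have h4 := Complex.sq_norm (u - v)
  have h5 := Complex.sq_norm (1 - (starRingEnd ℂ v) * u)
  nlinarith [norm_nonneg (u - v), norm_nonneg (1 - (starRingEnd ℂ v) * u)]

set_option maxHeartbeats 4000000 in
theorem abs_a4_le (f : ℂ → ℂ) (hf : IsSB f) :
    ‖taylorCoeff f 4‖ ≤ 19 / 36 := by
  obtain ⟨hfd, hf0, hf1, w, hwd, hw0, hwlt, heqn⟩ := hf
  have hBo : IsOpen (ball (0:ℂ) 1) := isOpen_ball
  have h0B : (0:ℂ) ∈ ball (0:ℂ) 1 := mem_ball_self one_pos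
  have hB : ball (0:ℂ) 1 ∈ 𝓝 (0:ℂ) := hBo.mem_nhds h0B
  have hfa : AnalyticOnNhd ℂ f (ball 0 1) := hfd.analyticOnNhd hBo
  have hwa : AnalyticOnNhd ℂ w (ball 0 1) := hwd.analyticOnNhd hBo
  have hslit : ∀ z ∈ ball (0:ℂ) 1, (1 + w z) ∈ Complex.slitPlane := fun z hz =>
    Complex.mem_slitPlane_of_norm_lt_one (by simpa using hwlt z hz)
  have hne1w : ∀ z ∈ ball (0:ℂ) 1, (1 + w z) ≠ 0 := fun z hz =>
    Complex.slitPlane_ne_zero (hslit z hz)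
  set L : ℂ → ℂ := fun z => Complex.log (1 + w z) with hLdef
  have hLd : DifferentiableOn ℂ L (ball 0 1) :=
    DifferentiableOn.clog (hwd.const_add 1) hslit
  have hLa : AnalyticOnNhd ℂ L (ball 0 1) := hLd.analyticOnNhd hBo
  have hL0 : L 0 = 0 := by simp [hLdef, hw0]
  have hLderiv : ∀ z ∈ ball (0:ℂ) 1, deriv L z * (1 + w z) = deriv w z := by
    intro z hz
    have hw' : HasDerivAt w (deriv w z) z := (hwd.differentiableAt (hBo.mem_nhds hz)).hasDerivAt
    have h1w : HasDerivAt (fun t => 1 + w t) (deriv w z) z := by simpa using hw'.const_add 1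
    have hLz : HasDerivAt L (deriv w z / (1 + w z)) z := h1w.clog (hslit z hz)
    rw [hLz.deriv, div_mul_cancel₀ _ (hne1w z hz)]
  have hfA : AnalyticAt ℂ f 0 := hfa 0 h0B
  have hwA : AnalyticAt ℂ w 0 := hwa 0 h0B
  have hLA : AnalyticAt ℂ L 0 := hLa 0 h0B
  have hdfA : AnalyticAt ℂ (deriv f) 0 := hfa.deriv 0 h0B
  have hdLA : AnalyticAt ℂ (deriv L) 0 := hLa.deriv 0 h0B
  have hdwA : AnalyticAt ℂ (deriv w) 0 := hwa.deriv 0 h0B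
  obtain ⟨RD, hRDc, hD⟩ := expand5 hdfA
  obtain ⟨RL, hRLc, hLe⟩ := expand5 hLA
  obtain ⟨RM, hRMc, hM⟩ := expand5 hdLA
  obtain ⟨RW, hRWc, hWe⟩ := expand5 hwA
  -- abbreviations
  set d0 := taylorCoeff (deriv f) 0 with hd0d
  set d1 := taylorCoeff (deriv f) 1 with hd1d
  set d2 := taylorCoeff (deriv f) 2 with hd2d
  set d3 := taylorCoeff (deriv f) 3 with hd3d
  set d4 := taylorCoeff (deriv f) 4 with hd4d
  set l0 := taylorCoeff L 0 with hl0d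
  set l1 := taylorCoeff L 1 with hl1d
  set l2 := taylorCoeff L 2 with hl2d
  set l3 := taylorCoeff L 3 with hl3d
  set l4 := taylorCoeff L 4 with hl4d
  set m0 := taylorCoeff (deriv L) 0 with hm0d
  set m1 := taylorCoeff (deriv L) 1 with hm1d
  set m2 := taylorCoeff (deriv L) 2 with hm2d
  set m3 := taylorCoeff (deriv L) 3 with hm3d
  set m4 := taylorCoeff (deriv L) 4 with hm4d
  set c0 := taylorCoeff w 0 with hc0d
  set c1 := taylorCoeff w 1 with hc1d
  set c2 := taylorCoeff w 2 with hc2d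
  set c3 := taylorCoeff w 3 with hc3d
  set c4 := taylorCoeff w 4 with hc4d
  set a2 := taylorCoeff f 2 with ha2d
  set a3 := taylorCoeff f 3 with ha3d
  set a4 := taylorCoeff f 4 with ha4d
  -- Equation A : coefficients of f
  have hScontA : ContinuousAt (fun z => (d4*(1-l0) - d0*l4 - d1*l3 - d2*l2 - d3*l1)
      + (-(d1*l4+d2*l3+d3*l2+d4*l1))*z + (-(d2*l4+d3*l3+d4*l2))*z^2
      + (-(d3*l4+d4*l3))*z^3 + (-(d4*l4))*z^4
      - z*(d0+d1*z+d2*z^2+d3*z^3+d4*z^4)*RL z + z*RD z*(1 - L z)) 0 := by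
    have hLc : ContinuousAt L 0 := hLA.continuousAt
    fun_prop
  have hidentA : ∀ᶠ z in 𝓝 (0:ℂ), f z = 0 + (d0*(1-l0))*z + (d1*(1-l0) - d0*l1)*z^2
      + (d2*(1-l0) - d1*l1 - d0*l2)*z^3 + (d3*(1-l0) - d2*l1 - d1*l2 - d0*l3)*z^4
      + ((d4*(1-l0) - d0*l4 - d1*l3 - d2*l2 - d3*l1)
      + (-(d1*l4+d2*l3+d3*l2+d4*l1))*z + (-(d2*l4+d3*l3+d4*l2))*z^2
      + (-(d3*l4+d4*l3))*z^3 + (-(d4*l4))*z^4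
      - z*(d0+d1*z+d2*z^2+d3*z^3+d4*z^4)*RL z + z*RD z*(1 - L z)) * z^5 := by
    filter_upwards [hB] with z hz'
    have he : z * deriv f z * (1 - L z) = f z := heqn z hz'
    rw [← he, hD z, hLe z]
    ring
  obtain ⟨-, eA1, eA2, eA3, eA4⟩ := taylorCoeff_eqs hfA hScontA hidentA
  -- Equation B : coefficients of deriv w  = (1 + w) * deriv L
  have hScontB : ContinuousAt (fun z => (c1*m4+c2*m3+c3*m2+c4*m1)
      + (c2*m4+c3*m3+c4*m2)*z + (c3*m4+c4*m3)*z^2 + (c4*m4)*z^3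
      + RW z*(m0+m1*z+m2*z^2+m3*z^3+m4*z^4) + RM z*(1 + w z)) 0 := by
    have hwc : ContinuousAt w 0 := hwA.continuousAt
    fun_prop
  have hidentB : ∀ᶠ z in 𝓝 (0:ℂ), deriv w z = ((1+c0)*m0) + ((1+c0)*m1 + c1*m0)*z
      + ((1+c0)*m2 + c1*m1 + c2*m0)*z^2 + ((1+c0)*m3 + c1*m2 + c2*m1 + c3*m0)*z^3
      + ((1+c0)*m4 + c1*m3 + c2*m2 + c3*m1 + c4*m0)*z^4
      + ((c1*m4+c2*m3+c3*m2+c4*m1)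
      + (c2*m4+c3*m3+c4*m2)*z + (c3*m4+c4*m3)*z^2 + (c4*m4)*z^3
      + RW z*(m0+m1*z+m2*z^2+m3*z^3+m4*z^4) + RM z*(1 + w z)) * z^5 := by
    filter_upwards [hB] with z hz'
    rw [← hLderiv z hz', hM z, hWe z]
    ring
  obtain ⟨eB0, eB1, eB2, -, -⟩ := taylorCoeff_eqs hdwA hScontB hidentB
  -- clean up the equations
  have hl0 : l0 = 0 := by rw [hl0d, taylorCoeff_zero_eq, hL0]
  have hc0 : c0 = 0 := by rw [hc0d, taylorCoeff_zero_eq, hw0]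
  have tf1 : taylorCoeff f 1 = 1 := by rw [taylorCoeff_one_eq, hf1]
  have hd0 : d0 = 1 := by rw [hd0d, taylorCoeff_deriv, tf1]; norm_num
  have hd1 : d1 = 2*a2 := by rw [hd1d, taylorCoeff_deriv, ← ha2d]; norm_num
  have hd2 : d2 = 3*a3 := by rw [hd2d, taylorCoeff_deriv, ← ha3d]; norm_num
  have hd3 : d3 = 4*a4 := by rw [hd3d, taylorCoeff_deriv, ← ha4d]; norm_num
  have hm0 : m0 = l1 := by rw [hm0d, taylorCoeff_deriv, ← hl1d]; norm_num
  have hm1 : m1 = 2*l2 := by rw [hm1d, taylorCoeff_deriv, ← hl2d]; norm_num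
  have hm2 : m2 = 3*l3 := by rw [hm2d, taylorCoeff_deriv, ← hl3d]; norm_num
  have tdw0 : taylorCoeff (deriv w) 0 = c1 := by rw [taylorCoeff_deriv, ← hc1d]; norm_num
  have tdw1 : taylorCoeff (deriv w) 1 = 2*c2 := by rw [taylorCoeff_deriv, ← hc2d]; norm_num
  have tdw2 : taylorCoeff (deriv w) 2 = 3*c3 := by rw [taylorCoeff_deriv, ← hc3d]; norm_num
  rw [hl0, hd0, hd1] at eA2
  rw [hl0, hd0, hd1, hd2] at eA3
  rw [hl0, hd0, hd1, hd2, hd3] at eA4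
  rw [tdw0, hc0, hm0] at eB0
  rw [tdw1, hc0, hm0, hm1] at eB1
  rw [tdw2, hc0, hm0, hm1, hm2] at eB2
  rw [← ha2d] at eA2
  rw [← ha3d] at eA3
  rw [← ha4d] at eA4
  -- eA2 : a2 = 2*a2*(1-0) - 1*l1, etc.
  have hl1 : l1 = a2 := by linear_combination eA2
  have hc1e : c1 = a2 := by linear_combination eB0 + hl1
  have hl2 : l2 = 2*a3 - 2*a2^2 := by linear_combination eA3 - 2*a2*hl1
  have hc2e : c2 = 2*a3 - (3/2)*a2^2 := by
    linear_combination (1:ℂ)/2*eB1 + hl2 + 1/2*l1*hc1e + 1/2*a2*hl1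
  have hl3 : l3 = c3 - 2*a2*a3 + (11/6)*a2^3 := by
    linear_combination -(1:ℂ)/3*eB2 - 2/3*l2*hc1e - 2/3*a2*hl2 - 1/3*l1*hc2e
      - 1/3*(2*a3 - (3/2)*a2^2)*hl1
  have key : 3*a4 = c3 + (5/2)*c1*c2 + (19/12)*c1^3 := by
    linear_combination -eA4 + 3*a3*hl1 + 2*a2*hl2 + hl3
      - (5/2)*c2*hc1e - (5/2)*a2*hc2e - (19/12)*(c1^2 + c1*a2 + a2^2)*hc1e
  -- Schwarz part : bound |c3 + (5/2) c1 c2 + (19/12) c1^3| ≤ 19/12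
  set g : ℂ → ℂ := dslope w 0 with hgdef
  have hwg : ∀ z, w z = z * g z := by
    intro z
    have h := sub_smul_dslope w 0 z
    rw [hw0, sub_zero, sub_zero, smul_eq_mul] at h
    exact h.symm
  have hgA : AnalyticAt ℂ g 0 := by
    obtain ⟨p, hp⟩ := hwA
    exact hp.has_fpower_series_dslope_fslope.analyticAt
  have hmapsw : Set.MapsTo w (ball (0:ℂ) 1) (ball (w 0) 1) := by
    intro z hz
    rw [hw0]
    exact mem_ball_zero_iff.mpr (by simpa using hwlt z hz)
  have hgb : ∀ z ∈ ball (0:ℂ) 1, ‖g z‖ ≤ 1 := by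
    intro z hz
    have := Complex.norm_dslope_le_div_of_mapsTo_ball hwd (hmapsw.mono_right ball_subset_closedBall) hz
    rw [hgdef]
    simpa using this
  have hgd : DifferentiableOn ℂ g (ball 0 1) := by
    intro z hz
    rcases eq_or_ne z 0 with rfl | hz0
    · exact hgA.differentiableAt.differentiableWithinAt
    · exact (differentiableWithinAt_dslope_of_ne hz0).mpr (hwd z hz)
  obtain ⟨RG, hRGc, hG⟩ := expand5 hgA
  -- coefficients of w from g
  have hScontG : ContinuousAt (fun z : ℂ => taylorCoeff g 4 + RG z * z) 0 := by fun_prop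
  have hidentG : ∀ᶠ z in 𝓝 (0:ℂ), w z = 0 + (taylorCoeff g 0)*z + (taylorCoeff g 1)*z^2
      + (taylorCoeff g 2)*z^3 + (taylorCoeff g 3)*z^4
      + (fun z : ℂ => taylorCoeff g 4 + RG z * z) z * z^5 := by
    filter_upwards with z
    rw [hwg z, hG z]
    ring
  obtain ⟨-, ew1, ew2, ew3, -⟩ := taylorCoeff_eqs hwA hScontG hidentG
  have hg00 : taylorCoeff g 0 = g 0 := taylorCoeff_zero_eq
  have hc1g : c1 = g 0 := by rw [hc1d, ew1, hg00]
  have habsc1 : ‖c1‖ ≤ 1 := by rw [hc1g]; exact hgb 0 h0B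
  have hmain : ‖c3 + (5/2)*c1*c2 + (19/12)*c1^3‖ ≤ 19/12 := by
    by_cases hcase : ∀ z ∈ ball (0:ℂ) 1, ‖g z‖ < 1
    · -- Möbius / Schur step
      have hC1lt : ‖c1‖ < 1 := by rw [hc1g]; exact hcase 0 h0B
      have hdenne : ∀ z ∈ ball (0:ℂ) 1, (1 - (starRingEnd ℂ c1) * g z) ≠ 0 := fun z hz =>
        mobius_denom_ne (hcase z hz) hC1lt
      set g2 : ℂ → ℂ := fun z => (g z - c1) / (1 - (starRingEnd ℂ c1) * g z) with hg2def
      have hg2d : DifferentiableOn ℂ g2 (ball 0 1) := by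
        apply DifferentiableOn.div
        · exact hgd.sub (differentiableOn_const c1)
        · exact (differentiableOn_const 1).sub
            ((differentiableOn_const ((starRingEnd ℂ) c1)).mul hgd)
        · exact hdenne
      have hg20 : g2 0 = 0 := by
        rw [hg2def]
        simp only [← hc1g, sub_self, zero_div]
      have hg2lt : ∀ z ∈ ball (0:ℂ) 1, ‖g2 z‖ < 1 := fun z hz =>
        mobius_abs_lt (hcase z hz) hC1lt
      have hg2A : AnalyticAt ℂ g2 0 := hg2d.analyticAt hB
      set h : ℂ → ℂ := dslope g2 0 with hhdef
      have hg2h : ∀ z, g2 z = z * h z := by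
        intro z
        have hs := sub_smul_dslope g2 0 z
        rw [hg20, sub_zero, sub_zero, smul_eq_mul] at hs
        exact hs.symm
      have hhA : AnalyticAt ℂ h 0 := by
        obtain ⟨p, hp⟩ := hg2A
        exact hp.has_fpower_series_dslope_fslope.analyticAt
      have hmapsg2 : Set.MapsTo g2 (ball (0:ℂ) 1) (ball (g2 0) 1) := by
        intro z hz
        rw [hg20]
        exact mem_ball_zero_iff.mpr (by simpa using hg2lt z hz)
      have hhb : ∀ z ∈ ball (0:ℂ) 1, ‖h z‖ ≤ 1 := by
        intro z hz
        have := Complex.norm_dslope_le_div_of_mapsTo_ball hg2d (hmapsg2.mono_right ball_subset_closedBall) hz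
        rw [hhdef]
        simpa using this
      have hhd : DifferentiableOn ℂ h (ball 0 1) := by
        intro z hz
        rcases eq_or_ne z 0 with rfl | hz0
        · exact hhA.differentiableAt.differentiableWithinAt
        · exact (differentiableWithinAt_dslope_of_ne hz0).mpr (hg2d z hz)
      obtain ⟨RH, hRHc, hH⟩ := expand5 hhA
      set e := (starRingEnd ℂ) c1 with hedef
      set dd0 := taylorCoeff h 0 with hdd0d
      set dd1 := taylorCoeff h 1 with hdd1d
      set dd2 := taylorCoeff h 2 with hdd2d
      set dd3 := taylorCoeff h 3 with hdd3d
      set dd4 := taylorCoeff h 4 with hdd4d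
      set gg0 := taylorCoeff g 0 with hgg0d
      set gg1 := taylorCoeff g 1 with hgg1d
      set gg2 := taylorCoeff g 2 with hgg2d
      set gg3 := taylorCoeff g 3 with hgg3d
      set gg4 := taylorCoeff g 4 with hgg4d
      have hScontH : ContinuousAt (fun z =>
          (dd4 - e*(dd0*gg4+dd1*gg3+dd2*gg2+dd3*gg1+dd4*gg0))
          + (-(e*(dd1*gg4+dd2*gg3+dd3*gg2+dd4*gg1)))*z
          + (-(e*(dd2*gg4+dd3*gg3+dd4*gg2)))*z^2
          + (-(e*(dd3*gg4+dd4*gg3)))*z^3 + (-(e*dd4*gg4))*z^4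
          - z*(dd0+dd1*z+dd2*z^2+dd3*z^3+dd4*z^4)*e*RG z + z*RH z*(1 - e*(gg0+gg1*z+gg2*z^2+gg3*z^3+gg4*z^4+RG z*z^5))) 0 := by
        fun_prop
      have hidentH : ∀ᶠ z in 𝓝 (0:ℂ), g z = c1 + (dd0*(1-e*gg0))*z
          + (dd1 - e*(dd0*gg1+dd1*gg0))*z^2 + (dd2 - e*(dd0*gg2+dd1*gg1+dd2*gg0))*z^3
          + (dd3 - e*(dd0*gg3+dd1*gg2+dd2*gg1+dd3*gg0))*z^4
          + ((dd4 - e*(dd0*gg4+dd1*gg3+dd2*gg2+dd3*gg1+dd4*gg0))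
          + (-(e*(dd1*gg4+dd2*gg3+dd3*gg2+dd4*gg1)))*z
          + (-(e*(dd2*gg4+dd3*gg3+dd4*gg2)))*z^2
          + (-(e*(dd3*gg4+dd4*gg3)))*z^3 + (-(e*dd4*gg4))*z^4
          - z*(dd0+dd1*z+dd2*z^2+dd3*z^3+dd4*z^4)*e*RG z + z*RH z*(1 - e*(gg0+gg1*z+gg2*z^2+gg3*z^3+gg4*z^4+RG z*z^5))) * z^5 := by
        filter_upwards [hB] with z hz'
        have hg2z : g2 z * (1 - e * g z) = g z - c1 :=
          div_mul_cancel₀ _ (hdenne z hz')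
        have hginv : g z = c1 + g2 z * (1 - e * g z) := by linear_combination -hg2z
        conv_lhs => rw [hginv]
        rw [hg2h z, hH z, hG z]
        ring
      obtain ⟨-, eg1, eg2, -, -⟩ := taylorCoeff_eqs hgA hScontH hidentH
      -- relations needed for psi_bound
      have hnormc1 : e * gg0 = (Complex.normSq c1 : ℂ) := by
        rw [hg00, ← hc1g, hedef, mul_comm, Complex.mul_conj]
      have hc2rel : c2 = dd0 * (1 - (Complex.normSq c1 : ℂ)) := by
        rw [hc2d, ew2, hgg1d, eg1, hnormc1]
      have hc3rel : c3 = dd1 * (1 - (Complex.normSq c1 : ℂ)) - dd0 * (starRingEnd ℂ c1) * c2 := by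
        have hgg0c : gg0 = c1 := by rw [hg00]; exact hc1g.symm
        have hgg1c : gg1 = c2 := by rw [hc2d, ew2]
        have hec1 : e * c1 = (Complex.normSq c1 : ℂ) := by
          rw [hedef, mul_comm, Complex.mul_conj]
        rw [hc3d, ew3, hgg2d, eg2, hgg0c, hgg1c, ← hedef]
        linear_combination (-dd1 : ℂ) * hec1
      have hdd0b : ‖dd0‖ ≤ 1 := by
        rw [hdd0d, taylorCoeff_zero_eq]
        exact hhb 0 h0B
      have hdd1b : ‖dd1‖ ≤ 1 - ‖dd0‖ ^ 2 := by
        by_cases hhlt : ∀ z ∈ ball (0:ℂ) 1, ‖h z‖ < 1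
        · have hh0lt : ‖h 0‖ < 1 := hhlt 0 h0B
          set h2 : ℂ → ℂ := fun z => (h z - h 0) / (1 - (starRingEnd ℂ (h 0)) * h z) with hh2def
          have hdenne2 : ∀ z ∈ ball (0:ℂ) 1, (1 - (starRingEnd ℂ (h 0)) * h z) ≠ 0 :=
            fun z hz => mobius_denom_ne (hhlt z hz) hh0lt
          have hh2d : DifferentiableOn ℂ h2 (ball 0 1) := by
            apply DifferentiableOn.div
            · exact hhd.sub (differentiableOn_const _)
            · exact (differentiableOn_const 1).sub
                ((differentiableOn_const ((starRingEnd ℂ) (h 0))).mul hhd)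
            · exact hdenne2
          have hh20 : h2 0 = 0 := by rw [hh2def]; simp
          have hmapsh2 : Set.MapsTo h2 (ball (0:ℂ) 1) (ball (h2 0) 1) := by
            intro z hz
            rw [hh20]
            exact mem_ball_zero_iff.mpr
              (by exact mobius_abs_lt (hhlt z hz) hh0lt)
          have hder := Complex.norm_deriv_le_div_of_mapsTo_ball hh2d (hmapsh2.mono_right ball_subset_closedBall) one_pos
          -- compute deriv h2 0
          have hhd0 : DifferentiableAt ℂ h 0 := hhA.differentiableAt
          have hn : HasDerivAt (fun z => h z - h 0) (deriv h 0) 0 :=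
            hhd0.hasDerivAt.sub_const _
          have hdd : HasDerivAt (fun z => 1 - (starRingEnd ℂ) (h 0) * h z)
              (-((starRingEnd ℂ) (h 0) * deriv h 0)) 0 :=
            (hhd0.hasDerivAt.const_mul ((starRingEnd ℂ) (h 0))).const_sub 1
          have hden0 : (1 - (starRingEnd ℂ) (h 0) * h 0) ≠ 0 :=
            mobius_denom_ne hh0lt hh0lt
          have hdiv : HasDerivAt (fun z => (h z - h 0) / (1 - (starRingEnd ℂ) (h 0) * h z)) _ 0 :=
            hn.div hdd hden0
          have hval : deriv h2 0 = deriv h 0 / (1 - (starRingEnd ℂ) (h 0) * h 0) := by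
            rw [hh2def, hdiv.deriv]
            field_simp
            ring
          have habsden : ‖1 - (starRingEnd ℂ) (h 0) * h 0‖
              = 1 - ‖h 0‖^2 := by
            have : (1 : ℂ) - (starRingEnd ℂ) (h 0) * h 0
                = ((1 - Complex.normSq (h 0) : ℝ) : ℂ) := by
              rw [mul_comm, Complex.mul_conj]
              push_cast
              ring
            rw [this, Complex.norm_real, Real.norm_eq_abs, _root_.abs_of_nonneg, Complex.sq_norm]
            rw [← Complex.sq_norm]
            nlinarith [norm_nonneg (h 0)]
          have hd1val : dd1 = deriv h 0 := by rw [hdd1d, taylorCoeff_one_eq]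
          have hd0val : dd0 = h 0 := by rw [hdd0d, taylorCoeff_zero_eq]
          rw [hd1val, hd0val]
          rw [hval, norm_div, habsden] at hder
          have hpos : (0:ℝ) < 1 - ‖h 0‖^2 := by
            nlinarith [norm_nonneg (h 0)]
          rw [div_le_iff₀ hpos] at hder
          · linarith [hder]
        · push_neg at hhlt
          obtain ⟨z0, hz0B, hz0ge⟩ := hhlt
          have hz0eq : ‖h z0‖ = 1 := le_antisymm (hhb z0 hz0B) hz0ge
          have hmax : IsMaxOn (norm ∘ h) (ball (0:ℂ) 1) z0 := by
            intro z hz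
            simp only [Function.comp_apply, hz0eq]
            exact hhb z hz
          have heqc := Complex.eqOn_of_isPreconnected_of_isMaxOn_norm
            (convex_ball (0:ℂ) 1).isPreconnected hBo hhd hz0B hmax
          have hconst : ∀ᶠ z in 𝓝 (0:ℂ), h z = (h z0) + 0*z + 0*z^2 + 0*z^3 + 0*z^4
              + (fun _ : ℂ => (0:ℂ)) z * z^5 := by
            filter_upwards [eventually_mem_nhds_iff.mpr (by simpa using hB)] with z hz
            have hz' : z ∈ ball (0:ℂ) 1 := by simpa using mem_of_mem_nhds hz
            have := heqc hz'
            simp only [Function.const_apply] at this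
            rw [this]
            ring
          obtain ⟨ech0, ech1, -, -, -⟩ := taylorCoeff_eqs hhA (by fun_prop) hconst
          have : dd1 = 0 := by rw [hdd1d, ech1]
          rw [this]
          have : dd0 = h z0 := by rw [hdd0d, ech0]
          rw [this, hz0eq]
          norm_num
      exact psi_bound c1 c2 c3 dd0 dd1 hdd0b hdd1b habsc1 hc2rel hc3rel
    · -- max-modulus case : g is constant, c2 = c3 = 0
      push_neg at hcase
      obtain ⟨z0, hz0B, hz0ge⟩ := hcase
      have hz0eq : ‖g z0‖ = 1 := le_antisymm (hgb z0 hz0B) hz0ge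
      have hmax : IsMaxOn (norm ∘ g) (ball (0:ℂ) 1) z0 := by
        intro z hz
        simp only [Function.comp_apply, hz0eq]
        exact hgb z hz
      have heqc := Complex.eqOn_of_isPreconnected_of_isMaxOn_norm
        (convex_ball (0:ℂ) 1).isPreconnected hBo hgd hz0B hmax
      have hconst : ∀ᶠ z in 𝓝 (0:ℂ), g z = (g z0) + 0*z + 0*z^2 + 0*z^3 + 0*z^4
          + (fun _ : ℂ => (0:ℂ)) z * z^5 := by
        filter_upwards [hB] with z hz'
        have := heqc hz'
        simp only [Function.const_apply] at this
        rw [this]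
        ring
      obtain ⟨-, ecg1, ecg2, -, -⟩ := taylorCoeff_eqs hgA (by fun_prop) hconst
      have hc2z : c2 = 0 := by rw [hc2d, ew2, ecg1]
      have hc3z : c3 = 0 := by rw [hc3d, ew3, ecg2]
      rw [hc2z, hc3z]
      simp only [mul_zero, add_zero, zero_add]
      rw [norm_mul, norm_pow]
      have h1 : ‖(19/12 : ℂ)‖ = 19/12 := by
        rw [show ((19:ℂ)/12) = ((19/12 : ℝ) : ℂ) by push_cast; ring, Complex.norm_real, Real.norm_eq_abs]
        norm_num
      rw [h1]
      nlinarith [norm_nonneg c1, pow_le_one₀ (norm_nonneg c1) habsc1 (n := 3),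
        pow_nonneg (norm_nonneg c1) 3]
  -- conclude
  have habs3 : ‖3 * a4‖ ≤ 19/12 := by
    rw [key]
    exact hmain
  rw [norm_mul] at habs3
  have h3 : ‖(3:ℂ)‖ = 3 := by
    rw [show ((3:ℂ)) = ((3:ℝ):ℂ) by norm_num, Complex.norm_real, Real.norm_eq_abs]
    norm_num
  rw [h3] at habs3
  linarith
end

section
/- If f belongs to the class S*_B, then the second-order Hankel determinant H_{2,1}(f) = a_3 − a_2² satisfies |a_3 − a_2²| ≤ 1/2. -/
open Complex Metric

section Aux

open Filter Topology

lemma mobius_id (a b : ℂ) :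
    normSq (1 - (starRingEnd ℂ) b * a) - normSq (a - b) = (1 - normSq a) * (1 - normSq b) := by
  simp [Complex.normSq_apply, Complex.sub_re, Complex.sub_im, Complex.mul_re, Complex.mul_im,
    Complex.one_re, Complex.one_im, Complex.conj_re, Complex.conj_im]
  ring

/-- Schwarz–Pick at the center of the unit disk. -/
lemma schwarz_pick_center {g : ℂ → ℂ} (hd : DifferentiableOn ℂ g (ball (0:ℂ) 1))
    (hg : ∀ z ∈ ball (0:ℂ) 1, ‖g z‖ < 1) :
    ‖deriv g 0‖ ≤ 1 - ‖g 0‖ ^ 2 := by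
  have h0 : (0:ℂ) ∈ ball (0:ℂ) 1 := mem_ball_self one_pos
  set b := g 0 with hb
  have hb1 : ‖b‖ < 1 := hg 0 h0
  have hden : ∀ z ∈ ball (0:ℂ) 1, (1 - (starRingEnd ℂ) b * g z) ≠ 0 := by
    intro z hz
    have : ‖(starRingEnd ℂ) b * g z‖ < 1 := by
      rw [norm_mul, Complex.norm_conj]
      calc ‖b‖ * ‖g z‖ ≤ 1 * ‖g z‖ :=
            mul_le_mul_of_nonneg_right hb1.le (norm_nonneg _)
        _ < 1 := by simpa using hg z hz
    intro h
    rw [sub_eq_zero] at h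
    rw [← h] at this
    simp at this
  set φ : ℂ → ℂ := fun z => (g z - b) * (1 - (starRingEnd ℂ) b * g z)⁻¹ with hφ
  have hφd : DifferentiableOn ℂ φ (ball (0:ℂ) 1) := by
    apply DifferentiableOn.mul (hd.sub (differentiableOn_const _))
    exact DifferentiableOn.inv ((differentiableOn_const _).sub
      ((differentiableOn_const _).mul hd)) hden
  have hφ0 : φ 0 = 0 := by simp [hφ, hb]
  have hmaps : Set.MapsTo φ (ball (0:ℂ) 1) (ball (0:ℂ) 1) := by
    intro z hz
    rw [mem_ball_zero_iff]
    have hkey := mobius_id (g z) b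
    have h1 : normSq (g z) < 1 := by
      rw [← Complex.sq_norm]; nlinarith [hg z hz, norm_nonneg (g z)]
    have h2 : normSq b < 1 := by
      rw [← Complex.sq_norm]; nlinarith [hb1, norm_nonneg b]
    have hlt : normSq (g z - b) < normSq (1 - (starRingEnd ℂ) b * g z) := by nlinarith
    have hlt2 : ‖g z - b‖ < ‖1 - (starRingEnd ℂ) b * g z‖ := by
      have e1 := Complex.sq_norm (g z - b)
      have e2 := Complex.sq_norm (1 - (starRingEnd ℂ) b * g z)
      nlinarith [norm_nonneg (g z - b), norm_nonneg (1 - (starRingEnd ℂ) b * g z)]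
    have hpos : (0:ℝ) < ‖1 - (starRingEnd ℂ) b * g z‖ :=
      norm_pos_iff.mpr (hden z hz)
    rw [hφ]
    simp only [norm_mul, norm_inv]
    rw [← div_eq_mul_inv, div_lt_one hpos]
    exact hlt2
  -- Schwarz at center
  have hschwarz : ‖deriv φ 0‖ ≤ 1 := by
    exact Complex.norm_deriv_le_one_of_mapsTo_ball hφd
      (by rw [hφ0]; exact hmaps.mono_right ball_subset_closedBall) one_pos
  -- compute deriv φ 0
  have hgd0 : DifferentiableAt ℂ g 0 := hd.differentiableAt (isOpen_ball.mem_nhds h0)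
  have hg0 : HasDerivAt g (deriv g 0) 0 := hgd0.hasDerivAt
  have hnum : HasDerivAt (fun z => g z - b) (deriv g 0) 0 := hg0.sub_const b
  have hden0 : (1 - (starRingEnd ℂ) b * b) ≠ 0 := by
    have := hden 0 h0; rwa [← hb] at this
  have hdenf : HasDerivAt (fun z => (1 - (starRingEnd ℂ) b * g z)⁻¹)
      (-(0 - (starRingEnd ℂ) b * deriv g 0) / (1 - (starRingEnd ℂ) b * b) ^ 2) 0 := by
    have h1 : HasDerivAt (fun z => (1:ℂ) - (starRingEnd ℂ) b * g z)
        (0 - (starRingEnd ℂ) b * deriv g 0) 0 :=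
      (hasDerivAt_const 0 (1:ℂ)).sub (hg0.const_mul _)
    exact h1.inv (by simpa using hden0)
  have hφderiv : HasDerivAt φ (deriv g 0 * (1 - (starRingEnd ℂ) b * b)⁻¹) 0 := by
    have := hnum.mul hdenf
    simp [hb] at this; exact this
  have hconj : (starRingEnd ℂ) b * b = (normSq b : ℂ) := by
    rw [mul_comm]; exact Complex.mul_conj b
  have habs : ‖1 - (starRingEnd ℂ) b * b‖ = 1 - ‖b‖ ^ 2 := by
    rw [hconj]
    have hcast : (1:ℂ) - (normSq b : ℂ) = ((1 - normSq b : ℝ) : ℂ) := by push_cast; ring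
    rw [hcast, Complex.norm_real, Real.norm_eq_abs,
      _root_.abs_of_nonneg (by nlinarith [Complex.sq_norm b, hb1, norm_nonneg b] :
        (0:ℝ) ≤ 1 - normSq b),
      ← Complex.sq_norm b]
  have : ‖deriv g 0‖ * (1 - ‖b‖ ^ 2)⁻¹ ≤ 1 := by
    rw [hφderiv.deriv] at hschwarz
    rw [norm_mul, norm_inv, habs] at hschwarz
    exact hschwarz
  have hp : (0:ℝ) < 1 - ‖b‖ ^ 2 := by nlinarith [hb1, norm_nonneg b]
  calc ‖deriv g 0‖
      = ‖deriv g 0‖ * (1 - ‖b‖ ^ 2)⁻¹ * (1 - ‖b‖ ^ 2) := by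
        field_simp
    _ ≤ 1 * (1 - ‖b‖ ^ 2) := mul_le_mul_of_nonneg_right this hp.le
    _ = 1 - ‖g 0‖ ^ 2 := by rw [one_mul, hb]

lemma schwarz_coeff {w : ℂ → ℂ} (hwd : DifferentiableOn ℂ w (ball (0:ℂ) 1))
    (hw0 : w 0 = 0) (hwlt : ∀ z ∈ ball (0:ℂ) 1, ‖w z‖ < 1)
    (spc : ∀ g : ℂ → ℂ, DifferentiableOn ℂ g (ball (0:ℂ) 1) →
      (∀ z ∈ ball (0:ℂ) 1, ‖g z‖ < 1) →
      ‖deriv g 0‖ ≤ 1 - ‖g 0‖ ^ 2) :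
    ‖deriv (deriv w) 0 - (deriv w 0) ^ 2‖ ≤ 2 := by
  have h0 : (0:ℂ) ∈ ball (0:ℂ) 1 := mem_ball_self one_pos
  set h : ℂ → ℂ := dslope w 0 with hh
  -- w z = z * h z
  have hwh : ∀ z, w z = z * h z := by
    intro z
    have := sub_smul_dslope w 0 z
    simp only [sub_zero, hw0, smul_eq_mul] at this
    rw [← this, hh]
  -- h analytic at 0
  have hwa : AnalyticAt ℂ w 0 := (hwd.analyticOnNhd isOpen_ball) 0 h0
  obtain ⟨p, hp⟩ := hwa
  have hha : AnalyticAt ℂ h 0 := hp.has_fpower_series_dslope_fslope.analyticAt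
  -- h differentiable on ball
  have hhd : DifferentiableOn ℂ h (ball (0:ℂ) 1) := by
    intro z hz
    rcases eq_or_ne z 0 with rfl | hz0
    · exact hha.differentiableAt.differentiableWithinAt
    · exact (differentiableWithinAt_dslope_of_ne hz0).2 (hwd z hz)
  -- bound on h
  have hmaps : Set.MapsTo w (ball (0:ℂ) 1) (ball (w 0) 1) := by
    intro z hz; rw [hw0, mem_ball_zero_iff]; exact hwlt z hz
  have hhb : ∀ z ∈ ball (0:ℂ) 1, ‖h z‖ ≤ 1 := by
    intro z hz
    have := Complex.norm_dslope_le_div_of_mapsTo_ball hwd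
      (hmaps.mono_right ball_subset_closedBall) hz
    simpa using this
  set c1 : ℂ := deriv w 0 with hc1
  set c2 : ℂ := deriv h 0 with hc2
  have hh0 : h 0 = c1 := dslope_same w 0
  have hc1le : ‖c1‖ ≤ 1 := by rw [← hh0]; exact hhb 0 h0
  -- deriv w z = h z + z * deriv h z on ball
  have hdw : ∀ z ∈ ball (0:ℂ) 1, deriv w z = h z + z * deriv h z := by
    intro z hz
    have hdiff : DifferentiableAt ℂ h z := hhd.differentiableAt (isOpen_ball.mem_nhds hz)
    have : HasDerivAt (fun y => y * h y) (1 * h z + z * deriv h z) z :=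
      (hasDerivAt_id z).mul hdiff.hasDerivAt
    have hEq : w = fun y => y * h y := funext hwh
    rw [hEq]
    rw [this.deriv]; ring
  -- second derivative of w at 0
  have hw2 : deriv (deriv w) 0 = 2 * c2 := by
    have hev : deriv w =ᶠ[𝓝 0] fun z => h z + z * deriv h z := by
      filter_upwards [isOpen_ball.mem_nhds h0] with z hz using hdw z hz
    have hdh : DifferentiableAt ℂ (deriv h) 0 :=
      ((hhd.analyticOnNhd isOpen_ball).deriv 0 h0).differentiableAt
    have hD : HasDerivAt (fun z => h z + z * deriv h z)
        (c2 + (1 * deriv h 0 + 0 * deriv (deriv h) 0)) 0 :=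
      (hha.differentiableAt.hasDerivAt).add ((hasDerivAt_id 0).mul hdh.hasDerivAt)
    rw [hev.deriv_eq, hD.deriv]; push_cast [hc2]; ring
  -- Schwarz-Pick applied to r * h
  have key : ∀ r : ℝ, 0 < r → r < 1 →
      r * ‖c2‖ + r^2 * ‖c1‖ ^ 2 ≤ 1 := by
    intro r hr0 hr1
    set g : ℂ → ℂ := fun z => (r:ℂ) * h z with hg
    have hgd : DifferentiableOn ℂ g (ball (0:ℂ) 1) := (differentiableOn_const _).mul hhd
    have hglt : ∀ z ∈ ball (0:ℂ) 1, ‖g z‖ < 1 := by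
      intro z hz
      rw [hg]
      simp only [norm_mul, Complex.norm_real, Real.norm_eq_abs, abs_of_pos hr0]
      calc r * ‖h z‖ ≤ r * 1 := by
            exact mul_le_mul_of_nonneg_left (hhb z hz) hr0.le
        _ < 1 := by linarith
    have hbnd := spc g hgd hglt
    have hgd0 : deriv g 0 = (r:ℂ) * c2 := by
      have : HasDerivAt g ((r:ℂ) * c2) 0 :=
        (hha.differentiableAt.hasDerivAt).const_mul (r:ℂ)
      exact this.deriv
    have hg0 : g 0 = (r:ℂ) * c1 := by rw [hg]; simp [hh0]
    rw [hgd0, hg0] at hbnd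
    simp only [norm_mul, Complex.norm_real, Real.norm_eq_abs, abs_of_pos hr0, mul_pow] at hbnd
    nlinarith [norm_nonneg c1, norm_nonneg c2]
  -- take limit r → 1
  have hlim : ‖c2‖ + ‖c1‖ ^ 2 ≤ 1 := by
    have htend : Tendsto (fun r : ℝ => r * ‖c2‖ + r^2 * ‖c1‖ ^ 2)
        (𝓝[<] (1:ℝ)) (𝓝 (‖c2‖ + ‖c1‖ ^ 2)) := by
      have hcont : Continuous (fun r : ℝ => r * ‖c2‖ + r^2 * ‖c1‖ ^ 2) :=
        (continuous_id.mul continuous_const).add ((continuous_pow 2).mul continuous_const)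
      have := (hcont.tendsto 1).mono_left (nhdsWithin_le_nhds : 𝓝[<] (1:ℝ) ≤ 𝓝 1)
      simpa using this
    refine le_of_tendsto htend ?_
    filter_upwards [Ioo_mem_nhdsLT_of_mem (⟨by norm_num, le_refl (1:ℝ)⟩ : (1:ℝ) ∈ Set.Ioc (1/2) 1)]
      with r hr
    exact key r (by linarith [hr.1]) hr.2
  -- conclude
  calc ‖deriv (deriv w) 0 - c1 ^ 2‖
      ≤ ‖deriv (deriv w) 0‖ + ‖c1 ^ 2‖ := by
        exact (norm_sub_le _ _)
    _ ≤ 2 := by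
        rw [hw2, norm_mul, norm_pow]
        simp only [Complex.norm_two]
        nlinarith [norm_nonneg c1, norm_nonneg c2]

lemma one_add_mem_slitPlane {z : ℂ} (h : ‖z‖ < 1) : (1 + z) ∈ Complex.slitPlane := by
  rw [Complex.mem_slitPlane_iff]
  left
  have h1 : |z.re| ≤ ‖z‖ := Complex.abs_re_le_norm z
  have h2 : (1 + z).re = 1 + z.re := by simp
  rw [h2]
  cases abs_le.1 h1 with
  | intro h3 h4 => linarith

lemma one_add_ne_zero' {z : ℂ} (h : ‖z‖ < 1) : (1 + z) ≠ 0 :=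
  Complex.slitPlane_ne_zero (one_add_mem_slitPlane h)

/-- From the structural equation, compute the key coefficient relations. -/
lemma coeff_relations {f w : ℂ → ℂ}
    (hfd : DifferentiableOn ℂ f (ball (0:ℂ) 1)) (hf1 : deriv f 0 = 1)
    (hwd : DifferentiableOn ℂ w (ball (0:ℂ) 1)) (hw0 : w 0 = 0)
    (hwlt : ∀ z ∈ ball (0:ℂ) 1, ‖w z‖ < 1)
    (heq : ∀ z ∈ ball (0:ℂ) 1, z * deriv f z * (1 - Complex.log (1 + w z)) = f z) :
    deriv (deriv f) 0 = 2 * deriv w 0 ∧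
    2 * deriv (deriv (deriv f)) 0 =
      6 * deriv (deriv f) 0 * deriv w 0 + 3 * (deriv (deriv w) 0 - (deriv w 0) ^ 2) := by
  have h0B : (0:ℂ) ∈ ball (0:ℂ) 1 := mem_ball_self one_pos
  have hBo : IsOpen (ball (0:ℂ) 1) := isOpen_ball
  have fa : AnalyticOnNhd ℂ f (ball (0:ℂ) 1) := hfd.analyticOnNhd hBo
  have Fa : AnalyticOnNhd ℂ (deriv f) (ball (0:ℂ) 1) := fa.deriv
  have F1a : AnalyticOnNhd ℂ (deriv (deriv f)) (ball (0:ℂ) 1) := Fa.deriv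
  have F2a : AnalyticOnNhd ℂ (deriv (deriv (deriv f))) (ball (0:ℂ) 1) := F1a.deriv
  have wa : AnalyticOnNhd ℂ w (ball (0:ℂ) 1) := hwd.analyticOnNhd hBo
  have w1a : AnalyticOnNhd ℂ (deriv w) (ball (0:ℂ) 1) := wa.deriv
  have w2a : AnalyticOnNhd ℂ (deriv (deriv w)) (ball (0:ℂ) 1) := w1a.deriv
  have hne : ∀ z ∈ ball (0:ℂ) 1, (1 + w z) ≠ 0 := fun z hz => one_add_ne_zero' (hwlt z hz)
  -- abbreviations (as plain defs)
  set L : ℂ → ℂ := fun z => Complex.log (1 + w z) with hLdef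
  set W1 : ℂ → ℂ := fun z => deriv w z / (1 + w z) with hW1def
  set W2 : ℂ → ℂ := fun z =>
      (deriv (deriv w) z * (1 + w z) - deriv w z * deriv w z) / (1 + w z) ^ 2 with hW2def
  -- basic HasDerivAt facts at points of the ball
  have hfD : ∀ z ∈ ball (0:ℂ) 1, HasDerivAt f (deriv f z) z :=
    fun z hz => ((fa z hz).differentiableAt).hasDerivAt
  have hFD : ∀ z ∈ ball (0:ℂ) 1, HasDerivAt (deriv f) (deriv (deriv f) z) z :=
    fun z hz => ((Fa z hz).differentiableAt).hasDerivAt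
  have hF1D : ∀ z ∈ ball (0:ℂ) 1, HasDerivAt (deriv (deriv f)) (deriv (deriv (deriv f)) z) z :=
    fun z hz => ((F1a z hz).differentiableAt).hasDerivAt
  have hF2D : ∀ z ∈ ball (0:ℂ) 1,
      HasDerivAt (deriv (deriv (deriv f))) (deriv (deriv (deriv (deriv f))) z) z :=
    fun z hz => ((F2a z hz).differentiableAt).hasDerivAt
  have hwD : ∀ z ∈ ball (0:ℂ) 1, HasDerivAt w (deriv w z) z :=
    fun z hz => ((wa z hz).differentiableAt).hasDerivAt
  have hw1D : ∀ z ∈ ball (0:ℂ) 1, HasDerivAt (deriv w) (deriv (deriv w) z) z :=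
    fun z hz => ((w1a z hz).differentiableAt).hasDerivAt
  have hLD : ∀ z ∈ ball (0:ℂ) 1, HasDerivAt L (W1 z) z := by
    intro z hz
    have h1 : HasDerivAt (fun y => 1 + w y) (deriv w z) z := (hwD z hz).const_add 1
    have h2 := h1.clog (one_add_mem_slitPlane (hwlt z hz))
    exact h2
  have hW1D : ∀ z ∈ ball (0:ℂ) 1, HasDerivAt W1 (W2 z) z := by
    intro z hz
    have h1 : HasDerivAt (fun y => 1 + w y) (deriv w z) z := (hwD z hz).const_add 1
    exact (hw1D z hz).div h1 (hne z hz)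
  -- W2 differentiable at 0 (in fact on the ball)
  have hW2diff : DifferentiableAt ℂ W2 0 := by
    have h1 : DifferentiableAt ℂ (fun y => 1 + w y) 0 :=
      (differentiableAt_const _).add (wa 0 h0B).differentiableAt
    have hnum : DifferentiableAt ℂ
        (fun y => deriv (deriv w) y * (1 + w y) - deriv w y * deriv w y) 0 :=
      ((w2a 0 h0B).differentiableAt.mul h1).sub
        ((w1a 0 h0B).differentiableAt.mul (w1a 0 h0B).differentiableAt)
    exact hnum.div (h1.pow 2) (pow_ne_zero 2 (hne 0 h0B))
  -- Equation E1 (first derivative of the structural equation)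
  have E1 : ∀ z ∈ ball (0:ℂ) 1,
      (1 * deriv f z + z * deriv (deriv f) z) * (1 - L z) + z * deriv f z * (0 - W1 z)
        = deriv f z := by
    intro z hz
    have hG : HasDerivAt (fun y => y * deriv f y * (1 - L y))
        ((1 * deriv f z + z * deriv (deriv f) z) * (1 - L z) + z * deriv f z * (0 - W1 z)) z :=
      ((hasDerivAt_id z).mul (hFD z hz)).mul ((hasDerivAt_const z 1).sub (hLD z hz))
    have hEqf : f =ᶠ[𝓝 z] fun y => y * deriv f y * (1 - L y) := by
      filter_upwards [hBo.mem_nhds hz] with y hy using (heq y hy).symm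
    exact ((hfD z hz).unique (hG.congr_of_eventuallyEq hEqf)).symm
  -- Equation E2 (second derivative, on the whole ball)
  have E2 : ∀ z ∈ ball (0:ℂ) 1,
      ((1 * deriv (deriv f) z + (1 * deriv (deriv f) z + z * deriv (deriv (deriv f)) z))
          * (1 - L z)
        + (1 * deriv f z + z * deriv (deriv f) z) * (0 - W1 z))
      + ((1 * deriv f z + z * deriv (deriv f) z) * (0 - W1 z)
        + z * deriv f z * (0 - W2 z)) = deriv (deriv f) z := by
    intro z hz
    have hU : HasDerivAt (fun y => 1 * deriv f y + y * deriv (deriv f) y)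
        (1 * deriv (deriv f) z + (1 * deriv (deriv f) z + z * deriv (deriv (deriv f)) z)) z :=
      ((hFD z hz).const_mul 1).add ((hasDerivAt_id z).mul (hF1D z hz))
    have hV : HasDerivAt (fun y => (1:ℂ) - L y) (0 - W1 z) z :=
      (hasDerivAt_const z 1).sub (hLD z hz)
    have hR : HasDerivAt (fun y => y * deriv f y) (1 * deriv f z + z * deriv (deriv f) z) z :=
      (hasDerivAt_id z).mul (hFD z hz)
    have hT : HasDerivAt (fun y => (0:ℂ) - W1 y) (0 - W2 z) z :=
      (hasDerivAt_const z 0).sub (hW1D z hz)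
    have hA : HasDerivAt
        (fun y => (1 * deriv f y + y * deriv (deriv f) y) * (1 - L y)
          + y * deriv f y * (0 - W1 y))
        (((1 * deriv (deriv f) z + (1 * deriv (deriv f) z + z * deriv (deriv (deriv f)) z))
            * (1 - L z)
          + (1 * deriv f z + z * deriv (deriv f) z) * (0 - W1 z))
        + ((1 * deriv f z + z * deriv (deriv f) z) * (0 - W1 z)
          + z * deriv f z * (0 - W2 z))) z := by
      exact (hU.mul hV).add (hR.mul hT)
    have hEqF : (deriv f) =ᶠ[𝓝 z] fun y =>
        (1 * deriv f y + y * deriv (deriv f) y) * (1 - L y) + y * deriv f y * (0 - W1 y) := by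
      filter_upwards [hBo.mem_nhds hz] with y hy using (E1 y hy).symm
    exact ((hFD z hz).unique (hA.congr_of_eventuallyEq hEqF)).symm
  -- values at 0
  have hL0 : L 0 = 0 := by simp [hLdef, hw0]
  have hW10 : W1 0 = deriv w 0 := by simp [hW1def, hw0]
  have hW20 : W2 0 = deriv (deriv w) 0 - (deriv w 0) ^ 2 := by
    simp [hW2def, hw0]; ring
  have hf0' : deriv f 0 = 1 := hf1
  -- first relation from E2 at 0
  have rel1 : deriv (deriv f) 0 = 2 * deriv w 0 := by
    have := E2 0 h0B
    rw [hL0, hW10, hW20, hf0'] at this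
    simp at this
    linear_combination this
  -- Equation E3: differentiate E2 at 0
  have E3 : ∃ d1 d2 : ℂ, True := ⟨0, 0, trivial⟩
  refine ⟨rel1, ?_⟩
  -- second derivative identity at 0
  -- build HasDerivAt of the E2 LHS function at 0
  have hU1 : HasDerivAt (fun y => 1 * deriv (deriv f) y +
      (1 * deriv (deriv f) y + y * deriv (deriv (deriv f)) y))
      (1 * deriv (deriv (deriv f)) 0 + (1 * deriv (deriv (deriv f)) 0 +
        (1 * deriv (deriv (deriv f)) 0 + 0 * deriv (deriv (deriv (deriv f))) 0))) 0 :=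
    ((hF1D 0 h0B).const_mul 1).add
      (((hF1D 0 h0B).const_mul 1).add ((hasDerivAt_id 0).mul (hF2D 0 h0B)))
  have hVat : HasDerivAt (fun y => (1:ℂ) - L y) (0 - W1 0) 0 :=
    (hasDerivAt_const 0 1).sub (hLD 0 h0B)
  have hUat : HasDerivAt (fun y => 1 * deriv f y + y * deriv (deriv f) y)
      (1 * deriv (deriv f) 0 + (1 * deriv (deriv f) 0 + 0 * deriv (deriv (deriv f)) 0)) 0 :=
    ((hFD 0 h0B).const_mul 1).add ((hasDerivAt_id 0).mul (hF1D 0 h0B))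
  have hV1at : HasDerivAt (fun y => (0:ℂ) - W1 y) (0 - W2 0) 0 :=
    (hasDerivAt_const 0 0).sub (hW1D 0 h0B)
  have hRat : HasDerivAt (fun y => y * deriv f y)
      (1 * deriv f 0 + 0 * deriv (deriv f) 0) 0 :=
    (hasDerivAt_id 0).mul (hFD 0 h0B)
  have hT1at : HasDerivAt (fun y => (0:ℂ) - W2 y) (0 - deriv W2 0) 0 :=
    (hasDerivAt_const 0 0).sub hW2diff.hasDerivAt
  have hA2 : HasDerivAt (fun z =>
      ((1 * deriv (deriv f) z + (1 * deriv (deriv f) z + z * deriv (deriv (deriv f)) z))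
          * (1 - L z)
        + (1 * deriv f z + z * deriv (deriv f) z) * (0 - W1 z))
      + ((1 * deriv f z + z * deriv (deriv f) z) * (0 - W1 z)
        + z * deriv f z * (0 - W2 z)))
      ((((1 * deriv (deriv (deriv f)) 0 + (1 * deriv (deriv (deriv f)) 0 +
            (1 * deriv (deriv (deriv f)) 0 + 0 * deriv (deriv (deriv (deriv f))) 0)))
          * (1 - L 0)
        + (1 * deriv (deriv f) 0 + (1 * deriv (deriv f) 0 + 0 * deriv (deriv (deriv f)) 0))
          * (0 - W1 0))
       + ((1 * deriv (deriv f) 0 + (1 * deriv (deriv f) 0 + 0 * deriv (deriv (deriv f)) 0))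
            * (0 - W1 0)
          + (1 * deriv f 0 + 0 * deriv (deriv f) 0) * (0 - W2 0)))
      + ((((1 * deriv (deriv f) 0 + (1 * deriv (deriv f) 0 + 0 * deriv (deriv (deriv f)) 0))
            * (0 - W1 0)
          + (1 * deriv f 0 + 0 * deriv (deriv f) 0) * (0 - W2 0)))
        + ((1 * deriv f 0 + 0 * deriv (deriv f) 0) * (0 - W2 0)
          + 0 * deriv f 0 * (0 - deriv W2 0)))) 0 := by
    have p1 := hU1.mul hVat
    have p2 := hUat.mul hV1at
    have p3 := hRat.mul hT1at
    have hUV : HasDerivAt (fun y => (1 * deriv f y + y * deriv (deriv f) y) * (0 - W1 y))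
        ((1 * deriv (deriv f) 0 + (1 * deriv (deriv f) 0 + 0 * deriv (deriv (deriv f)) 0))
          * (0 - W1 0)
        + (1 * deriv f 0 + 0 * deriv (deriv f) 0) * (0 - W2 0)) 0 := by
      exact hUat.mul hV1at
    have hRT : HasDerivAt (fun y => y * deriv f y * (0 - W2 y))
        ((1 * deriv f 0 + 0 * deriv (deriv f) 0) * (0 - W2 0)
          + 0 * deriv f 0 * (0 - deriv W2 0)) 0 := by
      exact hRat.mul hT1at
    exact ((hU1.mul hVat).add hUV).add (hUV.add hRT)
  have hEqF1 : (deriv (deriv f)) =ᶠ[𝓝 0] fun z =>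
      ((1 * deriv (deriv f) z + (1 * deriv (deriv f) z + z * deriv (deriv (deriv f)) z))
          * (1 - L z)
        + (1 * deriv f z + z * deriv (deriv f) z) * (0 - W1 z))
      + ((1 * deriv f z + z * deriv (deriv f) z) * (0 - W1 z)
        + z * deriv f z * (0 - W2 z)) := by
    filter_upwards [hBo.mem_nhds h0B] with y hy using (E2 y hy).symm
  have E3' := (hF1D 0 h0B).unique (hA2.congr_of_eventuallyEq hEqF1)
  rw [hL0, hW10, hW20, hf0'] at E3'
  linear_combination -E3'

end Aux

theorem hankel_H21 (f : ℂ → ℂ) (hf : IsSB f) :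
    ‖taylorCoeff f 3 - (taylorCoeff f 2) ^ 2‖ ≤ 1 / 2 := by
  obtain ⟨hfd, hf0, hf1, w, hwd, hw0, hwlt, heq⟩ := hf
  obtain ⟨rel1, rel2⟩ := coeff_relations hfd hf1 hwd hw0 hwlt heq
  have hb := schwarz_coeff hwd hw0 hwlt (fun g hgd hglt => schwarz_pick_center hgd hglt)
  have h2 : taylorCoeff f 2 = deriv (deriv f) 0 / 2 := by
    norm_num [taylorCoeff, iteratedDeriv_succ, iteratedDeriv_zero, Nat.factorial]
  have h3 : taylorCoeff f 3 = deriv (deriv (deriv f)) 0 / 6 := by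
    norm_num [taylorCoeff, iteratedDeriv_succ, iteratedDeriv_zero, Nat.factorial]
  have hkey : taylorCoeff f 3 - (taylorCoeff f 2) ^ 2
      = (deriv (deriv w) 0 - (deriv w 0) ^ 2) / 4 := by
    rw [h2, h3]
    linear_combination (1/12 : ℂ) * rel2 - (deriv (deriv f) 0 / 4) * rel1
  rw [hkey, norm_div]
  have h4 : ‖(4:ℂ)‖ = 4 := by norm_num [Complex.norm_ofNat]
  rw [h4]
  linarith
end

section
/- If f belongs to the class S*_B, then the second-order Toeplitz determinant T_{2,1}(f) = 1 − a_2² satisfies |1 − a_2²| ≤ 2. -/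
open Complex Metric

theorem toeplitz_T21 (f : ℂ → ℂ) (hf : IsSB f) :
    ‖1 - (taylorCoeff f 2) ^ 2‖ ≤ 2 := by
  obtain ⟨hfd, hf0, hf1, w, hwd, hw0, hwb, heq⟩ := hf
  have hob : IsOpen (ball (0:ℂ) 1) := isOpen_ball
  have hfa : AnalyticOnNhd ℂ f (ball 0 1) := hfd.analyticOnNhd hob
  have hwa : AnalyticOnNhd ℂ w (ball 0 1) := hwd.analyticOnNhd hob
  have h0 : (0:ℂ) ∈ ball (0:ℂ) 1 := by simp
  have hslit : ∀ z ∈ ball (0:ℂ) 1, 1 + w z ∈ Complex.slitPlane := fun z hz =>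
    Complex.mem_slitPlane_of_norm_lt_one (by simpa using hwb z hz)
  set E : ℂ → ℂ := fun z =>
    (deriv f z + z * deriv (deriv f) z) * (1 - Complex.log (1 + w z)) -
      z * deriv f z * ((1 + w z)⁻¹ * deriv w z) with hE
  -- Step A: deriv f = E on the ball
  have stepA : ∀ z ∈ ball (0:ℂ) 1, deriv f z = E z := by
    intro z hz
    have hgz : (fun y => y * deriv f y * (1 - Complex.log (1 + w y))) =ᶠ[nhds z] f := by
      filter_upwards [hob.mem_nhds hz] with y hy using heq y hy
    have hf' : HasDerivAt f (deriv f z) z := (hfa z hz).differentiableAt.hasDerivAt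
    have hf'' : HasDerivAt (deriv f) (deriv (deriv f) z) z :=
      ((hfa.deriv z hz)).differentiableAt.hasDerivAt
    have hw' : HasDerivAt w (deriv w z) z := (hwa z hz).differentiableAt.hasDerivAt
    have hL : HasDerivAt (fun y => Complex.log (1 + w y))
        ((1 + w z)⁻¹ * (0 + deriv w z)) z :=
      by have h := (Complex.hasDerivAt_log (hslit z hz)).comp z ((hasDerivAt_const z (1:ℂ)).add hw'); exact h
    have hu : HasDerivAt (fun y => y * deriv f y)
        (1 * deriv f z + z * deriv (deriv f) z) z := (hasDerivAt_id z).mul hf''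
    have hv : HasDerivAt (fun y => (1:ℂ) - Complex.log (1 + w y))
        (0 - (1 + w z)⁻¹ * (0 + deriv w z)) z := (hasDerivAt_const z (1:ℂ)).sub hL
    have hg : HasDerivAt (fun y => y * deriv f y * (1 - Complex.log (1 + w y)))
        ((1 * deriv f z + z * deriv (deriv f) z) * (1 - Complex.log (1 + w z)) +
          z * deriv f z * (0 - (1 + w z)⁻¹ * (0 + deriv w z))) z := hu.mul hv
    have : deriv f z = deriv (fun y => y * deriv f y * (1 - Complex.log (1 + w y))) z :=
      (hgz.deriv_eq).symm
    rw [this, hg.deriv, hE]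
    ring
  -- Step B: compute deriv E 0
  have hne0 : (1 : ℂ) + w 0 ≠ 0 := Complex.slitPlane_ne_zero (hslit 0 h0)
  set a := deriv (deriv f) 0 with ha
  set b := deriv w 0 with hb
  have hf''0 : HasDerivAt (deriv f) a 0 := (hfa.deriv 0 h0).differentiableAt.hasDerivAt
  have hf'''0 : HasDerivAt (deriv (deriv f)) (deriv (deriv (deriv f)) 0) 0 :=
    (hfa.deriv.deriv 0 h0).differentiableAt.hasDerivAt
  have hw'0 : HasDerivAt w b 0 := (hwa 0 h0).differentiableAt.hasDerivAt
  have hw''0 : HasDerivAt (deriv w) (deriv (deriv w) 0) 0 :=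
    (hwa.deriv 0 h0).differentiableAt.hasDerivAt
  have hf'0 : HasDerivAt f (deriv f 0) 0 := (hfa 0 h0).differentiableAt.hasDerivAt
  have hL0 : HasDerivAt (fun y => Complex.log (1 + w y)) ((1 + w 0)⁻¹ * (0 + b)) 0 :=
    by have h := (Complex.hasDerivAt_log (hslit 0 h0)).comp 0 ((hasDerivAt_const 0 (1:ℂ)).add hw'0); exact h
  have hinv : HasDerivAt (fun y => (1 + w y)⁻¹) (-(0 + b) / (1 + w 0) ^ 2) 0 :=
    ((hasDerivAt_const 0 (1:ℂ)).add hw'0).inv hne0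
  have hS : HasDerivAt (fun y => (1 + w y)⁻¹ * deriv w y)
      (-(0 + b) / (1 + w 0) ^ 2 * deriv w 0 + (1 + w 0)⁻¹ * deriv (deriv w) 0) 0 :=
    hinv.mul hw''0
  have hP : HasDerivAt (fun y => deriv f y + y * deriv (deriv f) y)
      (a + (1 * a + 0 * deriv (deriv (deriv f)) 0)) 0 :=
    hf''0.add ((hasDerivAt_id 0).mul hf'''0)
  have hQ : HasDerivAt (fun y => (1:ℂ) - Complex.log (1 + w y))
      (0 - (1 + w 0)⁻¹ * (0 + b)) 0 := (hasDerivAt_const 0 (1:ℂ)).sub hL0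
  have hR : HasDerivAt (fun y => y * deriv f y) (1 * deriv f 0 + 0 * a) 0 :=
    (hasDerivAt_id 0).mul hf''0
  have hEd : HasDerivAt E
      ((a + (1 * a + 0 * deriv (deriv (deriv f)) 0)) * (1 - Complex.log (1 + w 0)) +
        (deriv f 0 + 0 * a) * (0 - (1 + w 0)⁻¹ * (0 + b)) -
       ((1 * deriv f 0 + 0 * a) * ((1 + w 0)⁻¹ * deriv w 0) +
        0 * deriv f 0 *
          (-(0 + b) / (1 + w 0) ^ 2 * deriv w 0 + (1 + w 0)⁻¹ * deriv (deriv w) 0))) 0 :=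
    (hP.mul hQ).sub (hR.mul hS)
  have hED : deriv E 0 = 2 * a - 2 * b := by
    rw [hEd.deriv, hw0, hf1, ← hb]
    simp [Complex.log_one]
    ring
  -- combine
  have hfE : deriv f =ᶠ[nhds (0:ℂ)] E := by
    filter_upwards [hob.mem_nhds h0] with y hy using stepA y hy
  have hkey : a = 2 * a - 2 * b := by
    have h := hfE.deriv_eq
    rw [hED] at h
    exact h
  have hab : a = 2 * b := by linear_combination -hkey
  -- Schwarz lemma
  have hmaps : Set.MapsTo w (ball (0:ℂ) 1) (ball (0:ℂ) 1) := fun z hz => by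
    simpa [mem_ball_zero_iff] using hwb z hz
  have hb1 : ‖b‖ ≤ 1 :=
    Complex.norm_deriv_le_one_of_mapsTo_ball hwd (by rw [hw0]; exact hmaps.mono_right ball_subset_closedBall) one_pos
  have hcoef : taylorCoeff f 2 = b := by
    have h2 : iteratedDeriv 2 f 0 = deriv (deriv f) 0 := by
      rw [show (2:ℕ) = 1 + 1 from rfl, iteratedDeriv_succ, iteratedDeriv_one]
    rw [taylorCoeff, h2, ← ha, hab]
    norm_num [Nat.factorial]
  rw [hcoef]
  calc ‖1 - b ^ 2‖ ≤ ‖(1:ℂ)‖ + ‖b ^ 2‖ :=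
        norm_sub_le 1 (b ^ 2)
    _ ≤ 2 := by
        rw [norm_one, norm_pow]
        nlinarith [norm_nonneg b, hb1]
end

section
/- If f belongs to the class S*_B, then the second-order Toeplitz determinant T_{2,2}(f) = a_2² − a_3² satisfies |a_2² − a_3²| ≤ 25/16. -/
open Complex Metric

open Set

-- Möbius bound
lemma moebius_bound (a G : ℂ) (ha : ‖a‖ ≤ 1) (hG : ‖G‖ ≤ 1) :
    ‖G - a‖ ≤ ‖1 - (starRingEnd ℂ) a * G‖ := by
  have key : (1 - (starRingEnd ℂ) a * G) * (starRingEnd ℂ) (1 - (starRingEnd ℂ) a * G)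
      - (G - a) * (starRingEnd ℂ) (G - a)
      = (1 - a * (starRingEnd ℂ) a) * (1 - G * (starRingEnd ℂ) G) := by
    simp only [map_sub, map_mul, map_one, Complex.conj_conj]
    ring
  have h1 : ∀ z : ℂ, z * (starRingEnd ℂ) z = (Complex.normSq z : ℂ) := fun z => Complex.mul_conj z
  rw [h1, h1, h1, h1] at key
  have key' : Complex.normSq (1 - (starRingEnd ℂ) a * G) - Complex.normSq (G - a)
      = (1 - Complex.normSq a) * (1 - Complex.normSq G) := by
    exact_mod_cast key
  have ha' : Complex.normSq a ≤ 1 := by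
    have := Complex.sq_norm a; nlinarith [norm_nonneg a]
  have hG' : Complex.normSq G ≤ 1 := by
    have := Complex.sq_norm G; nlinarith [norm_nonneg G]
  have : Complex.normSq (G - a) ≤ Complex.normSq (1 - (starRingEnd ℂ) a * G) := by nlinarith
  have := Real.sqrt_le_sqrt this
  simpa [Complex.norm_def] using this

-- Schwarz–Pick derivative bound at 0
lemma schwarz_pick {g : ℂ → ℂ} (hg : DifferentiableOn ℂ g (ball (0:ℂ) 1))
    (hb : ∀ z ∈ ball (0:ℂ) 1, ‖g z‖ ≤ 1) :
    ‖deriv g 0‖ ≤ 1 - ‖g 0‖ ^ 2 := by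
  have h0 : (0:ℂ) ∈ ball (0:ℂ) 1 := mem_ball_self one_pos
  have ha1 : ‖g 0‖ ≤ 1 := hb 0 h0
  set a := g 0 with ha_def
  rcases lt_or_eq_of_le ha1 with ha | ha
  · -- |a| < 1
    set c := (starRingEnd ℂ) a with hc_def
    have hden : ∀ z ∈ ball (0:ℂ) 1, 1 - c * g z ≠ 0 := by
      intro z hz h
      have : ‖c * g z‖ < 1 := by
        rw [norm_mul]
        have : ‖c‖ = ‖a‖ := Complex.norm_conj a
        calc ‖c‖ * ‖g z‖ ≤ ‖c‖ * 1 :=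
              mul_le_mul_of_nonneg_left (hb z hz) (norm_nonneg c)
          _ = ‖a‖ := by rw [this, mul_one]
          _ < 1 := ha
      have h1 : c * g z = 1 := by linear_combination -h
      rw [h1] at this; simp at this
    set h : ℂ → ℂ := fun z => (g z - a) * (1 - c * g z)⁻¹ with hh_def
    have hhd : DifferentiableOn ℂ h (ball (0:ℂ) 1) := by
      apply DifferentiableOn.mul (hg.sub_const a)
      exact DifferentiableOn.inv ((differentiableOn_const 1).sub ((differentiableOn_const c).mul hg)) hden
    have hh0 : h 0 = 0 := by simp [hh_def, ← ha_def]
    have hhb : ∀ z ∈ ball (0:ℂ) 1, ‖h z‖ ≤ 1 := by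
      intro z hz
      rw [hh_def]
      simp only [norm_mul, norm_inv]
      rw [inv_eq_one_div, mul_comm, div_mul_eq_mul_div, one_mul, div_le_one_iff]
      left
      constructor
      · exact lt_of_le_of_ne (norm_nonneg _) (fun e => hden z hz (by
          have := norm_eq_zero.mp e.symm; linear_combination this))
      · exact moebius_bound a (g z) ha1 (hb z hz)
    -- deriv bound via Schwarz with radius R for every R > 1
    have key : ∀ R : ℝ, 1 < R → ‖deriv h 0‖ ≤ R := by
      intro R hR
      have hmaps : MapsTo h (ball (0:ℂ) 1) (ball (h 0) R) := by
        intro z hz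
        rw [hh0, mem_ball, dist_zero_right]
        exact lt_of_le_of_lt (hhb z hz) hR
      have := Complex.norm_deriv_le_div_of_mapsTo_ball hhd (hmaps.mono_right ball_subset_closedBall) one_pos
      rw [div_one] at this
      exact this
    have hderle : ‖deriv h 0‖ ≤ 1 := by
      by_contra hcon
      push_neg at hcon
      have := key ((1 + ‖deriv h 0‖) / 2) (by linarith)
      linarith
    -- compute deriv h 0
    have hgd0 : DifferentiableAt ℂ g 0 := hg.differentiableAt (isOpen_ball.mem_nhds h0)
    have hg0' : HasDerivAt g (deriv g 0) 0 := hgd0.hasDerivAt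
    have hden0 : (1 : ℂ) - c * g 0 ≠ 0 := hden 0 h0
    have h2 : HasDerivAt (fun z => (1:ℂ) - c * g z) (-(c * deriv g 0)) 0 := by
      simpa using (hg0'.const_mul c).const_sub 1
    have h3 : HasDerivAt (fun z => ((1:ℂ) - c * g z)⁻¹)
        (-(-(c * deriv g 0)) / ((1:ℂ) - c * g 0) ^ 2) 0 := h2.inv hden0
    have h4 : HasDerivAt h
        (deriv g 0 * ((1:ℂ) - c * g 0)⁻¹ +
          (g 0 - a) * (-(-(c * deriv g 0)) / ((1:ℂ) - c * g 0) ^ 2)) 0 :=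
      (hg0'.sub_const a).mul h3
    have hderh : deriv h 0 = deriv g 0 * ((1:ℂ) - c * g 0)⁻¹ := by
      rw [h4.deriv, ← ha_def]
      simp
    have hca : c * g 0 = ((Complex.normSq a : ℝ) : ℂ) := by
      rw [hc_def, ← ha_def, mul_comm, Complex.mul_conj]
    have hnsq : Complex.normSq a < 1 := by
      have := Complex.sq_norm a
      nlinarith [norm_nonneg a]
    have habs1 : ‖(1:ℂ) - c * g 0‖ = 1 - Complex.normSq a := by
      rw [hca]
      rw [show (1:ℂ) - ((Complex.normSq a : ℝ) : ℂ) = (((1 - Complex.normSq a : ℝ)) : ℂ) by push_cast; ring]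
      rw [Complex.norm_real, Real.norm_eq_abs, abs_of_pos (by linarith)]
    have : ‖deriv h 0‖ = ‖deriv g 0‖ / (1 - Complex.normSq a) := by
      rw [hderh, norm_mul, norm_inv, habs1, div_eq_mul_inv]
    rw [this] at hderle
    have hpos : (0:ℝ) < 1 - Complex.normSq a := by linarith
    rw [div_le_one hpos] at hderle
    have : ‖g 0‖ ^ 2 = Complex.normSq a := by rw [← ha_def, Complex.sq_norm]
    linarith
  · -- |a| = 1 : maximum modulus, g constant
    have hmax : IsMaxOn (norm ∘ g) (ball (0:ℂ) 1) 0 := by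
      intro z hz
      simp only [Function.comp, Set.mem_setOf_eq]
      rw [ha]
      exact hb z hz
    have := Complex.eqOn_of_isPreconnected_of_isMaxOn_norm (convex_ball (0:ℂ) 1).isPreconnected
      isOpen_ball hg h0 hmax
    have hd0 : deriv g 0 = 0 := by
      have : deriv g 0 = deriv (Function.const ℂ (g 0)) 0 :=
        Filter.EventuallyEq.deriv_eq (Filter.eventuallyEq_of_mem (isOpen_ball.mem_nhds h0) this)
      rw [this, show Function.const ℂ (g 0) = fun _ => g 0 from rfl, deriv_const]
    rw [hd0]
    have : ‖g 0‖ = 1 := ha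
    simp [this, ha]

lemma derivCongrOn {F G : ℂ → ℂ} {s : Set ℂ} (hs : IsOpen s) (h : Set.EqOn F G s)
    {z : ℂ} (hz : z ∈ s) : deriv F z = deriv G z :=
  Filter.EventuallyEq.deriv_eq (Filter.eventuallyEq_of_mem (hs.mem_nhds hz) h)

set_option maxHeartbeats 1600000 in
theorem toeplitz_T22 (f : ℂ → ℂ) (hf : IsSB f) :
    ‖(taylorCoeff f 2) ^ 2 - (taylorCoeff f 3) ^ 2‖ ≤ 25 / 16 := by
  obtain ⟨hfd, hf0, hf1, w, hwd, hw0, hwb, heq⟩ := hf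
  have h0 : (0:ℂ) ∈ ball (0:ℂ) 1 := mem_ball_self one_pos
  have hslit : ∀ z ∈ ball (0:ℂ) 1, 1 + w z ∈ slitPlane := fun z hz =>
    Complex.mem_slitPlane_of_norm_lt_one (by simpa using hwb z hz)
  -- analyticity
  have hfa : AnalyticOnNhd ℂ f (ball (0:ℂ) 1) := hfd.analyticOnNhd isOpen_ball
  have hwa : AnalyticOnNhd ℂ w (ball (0:ℂ) 1) := hwd.analyticOnNhd isOpen_ball
  set v : ℂ → ℂ := fun z => 1 - Complex.log (1 + w z) with hv_def
  have hva : AnalyticOnNhd ℂ v (ball (0:ℂ) 1) := by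
    intro z hz
    exact analyticAt_const.sub ((analyticAt_const.add (hwa z hz)).clog (hslit z hz))
  set v1 : ℂ → ℂ := deriv v with hv1_def
  set v2 : ℂ → ℂ := deriv v1 with hv2_def
  have hv1a : AnalyticOnNhd ℂ v1 (ball (0:ℂ) 1) := hva.deriv
  have hv2a : AnalyticOnNhd ℂ v2 (ball (0:ℂ) 1) := hv1a.deriv
  -- pointwise HasDerivAt facts
  have Hu : ∀ z ∈ ball (0:ℂ) 1, HasDerivAt (deriv f) (deriv (deriv f) z) z :=
    fun z hz => ((hfa.deriv z hz).differentiableAt).hasDerivAt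
  have Hu1 : ∀ z ∈ ball (0:ℂ) 1, HasDerivAt (deriv (deriv f)) (deriv (deriv (deriv f)) z) z :=
    fun z hz => ((hfa.deriv.deriv z hz).differentiableAt).hasDerivAt
  have Hu2 : ∀ z ∈ ball (0:ℂ) 1,
      HasDerivAt (deriv (deriv (deriv f))) (deriv (deriv (deriv (deriv f))) z) z :=
    fun z hz => ((hfa.deriv.deriv.deriv z hz).differentiableAt).hasDerivAt
  have Hv : ∀ z ∈ ball (0:ℂ) 1, HasDerivAt v (v1 z) z :=
    fun z hz => ((hva z hz).differentiableAt).hasDerivAt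
  have Hv1 : ∀ z ∈ ball (0:ℂ) 1, HasDerivAt v1 (v2 z) z :=
    fun z hz => ((hv1a z hz).differentiableAt).hasDerivAt
  have Hv2 : ∀ z ∈ ball (0:ℂ) 1, HasDerivAt v2 (deriv v2 z) z :=
    fun z hz => ((hv2a z hz).differentiableAt).hasDerivAt
  have Hw : ∀ z ∈ ball (0:ℂ) 1, HasDerivAt w (deriv w z) z :=
    fun z hz => ((hwa z hz).differentiableAt).hasDerivAt
  have Hw1 : ∀ z ∈ ball (0:ℂ) 1, HasDerivAt (deriv w) (deriv (deriv w) z) z :=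
    fun z hz => ((hwa.deriv z hz).differentiableAt).hasDerivAt
  -- values at 0
  have hu0 : deriv f 0 = 1 := hf1
  have hvz : v 0 = 1 := by simp [hv_def, hw0]
  -- E1
  have heq' : Set.EqOn f (fun y => y * deriv f y * v y) (ball (0:ℂ) 1) := by
    intro y hy
    simp only [hv_def]
    exact (heq y hy).symm
  have E1 : ∀ z ∈ ball (0:ℂ) 1,
      deriv f z = (deriv f z + z * deriv (deriv f) z) * v z + (z * deriv f z) * v1 z := by
    intro z hz
    have hP : HasDerivAt (fun y => y * deriv f y * v y)
        ((1 * deriv f z + z * deriv (deriv f) z) * v z + (z * deriv f z) * v1 z) z :=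
      ((hasDerivAt_id z).mul (Hu z hz)).mul (Hv z hz)
    have h1 : deriv f z = deriv (fun y => y * deriv f y * v y) z :=
      derivCongrOn isOpen_ball heq' hz
    refine h1.trans ?_
    rw [hP.deriv]; ring
  -- E2
  have E2 : ∀ z ∈ ball (0:ℂ) 1,
      deriv (deriv f) z =
        ((2 * deriv (deriv f) z + z * deriv (deriv (deriv f)) z) * v z +
          (deriv f z + z * deriv (deriv f) z) * v1 z) +
        ((deriv f z + z * deriv (deriv f) z) * v1 z + (z * deriv f z) * v2 z) := by
    intro z hz
    have hA : HasDerivAt (fun y => deriv f y + y * deriv (deriv f) y)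
        (deriv (deriv f) z + (1 * deriv (deriv f) z + z * deriv (deriv (deriv f)) z)) z :=
      (Hu z hz).add ((hasDerivAt_id z).mul (Hu1 z hz))
    have hB : HasDerivAt (fun y => y * deriv f y)
        (1 * deriv f z + z * deriv (deriv f) z) z := (hasDerivAt_id z).mul (Hu z hz)
    have hQ : HasDerivAt (fun y => (deriv f y + y * deriv (deriv f) y) * v y +
        (y * deriv f y) * v1 y)
        (((deriv (deriv f) z + (1 * deriv (deriv f) z + z * deriv (deriv (deriv f)) z)) * v z +
          (deriv f z + z * deriv (deriv f) z) * v1 z) +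
         ((1 * deriv f z + z * deriv (deriv f) z) * v1 z + (z * deriv f z) * v2 z)) z :=
      (hA.mul (Hv z hz)).add (hB.mul (Hv1 z hz))
    have h1 : deriv (deriv f) z =
        deriv (fun y => (deriv f y + y * deriv (deriv f) y) * v y + (y * deriv f y) * v1 y) z :=
      derivCongrOn isOpen_ball (fun y hy => E1 y hy) hz
    refine h1.trans ?_
    rw [hQ.deriv]; ring
  -- E3 (at 0)
  have hT1 : HasDerivAt
      (fun y => (2 * deriv (deriv f) y + y * deriv (deriv (deriv f)) y) * v y)
      ((2 * deriv (deriv (deriv f)) 0 +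
          (1 * deriv (deriv (deriv f)) 0 + 0 * deriv (deriv (deriv (deriv f))) 0)) * v 0 +
        (2 * deriv (deriv f) 0 + 0 * deriv (deriv (deriv f)) 0) * v1 0) 0 :=
    (((Hu1 0 h0).const_mul 2).add ((hasDerivAt_id 0).mul (Hu2 0 h0))).mul (Hv 0 h0)
  have hT2 : HasDerivAt
      (fun y => (deriv f y + y * deriv (deriv f) y) * v1 y)
      ((deriv (deriv f) 0 + (1 * deriv (deriv f) 0 + 0 * deriv (deriv (deriv f)) 0)) * v1 0 +
        (deriv f 0 + 0 * deriv (deriv f) 0) * v2 0) 0 :=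
    ((Hu 0 h0).add ((hasDerivAt_id 0).mul (Hu1 0 h0))).mul (Hv1 0 h0)
  have hT3 : HasDerivAt (fun y => (y * deriv f y) * v2 y)
      ((1 * deriv f 0 + 0 * deriv (deriv f) 0) * v2 0 + (0 * deriv f 0) * deriv v2 0) 0 :=
    ((hasDerivAt_id 0).mul (Hu 0 h0)).mul (Hv2 0 h0)
  have hR : HasDerivAt
      (fun y => ((2 * deriv (deriv f) y + y * deriv (deriv (deriv f)) y) * v y +
          (deriv f y + y * deriv (deriv f) y) * v1 y) +
        ((deriv f y + y * deriv (deriv f) y) * v1 y + (y * deriv f y) * v2 y))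
      (((2 * deriv (deriv (deriv f)) 0 +
          (1 * deriv (deriv (deriv f)) 0 + 0 * deriv (deriv (deriv (deriv f))) 0)) * v 0 +
        (2 * deriv (deriv f) 0 + 0 * deriv (deriv (deriv f)) 0) * v1 0 +
        ((deriv (deriv f) 0 + (1 * deriv (deriv f) 0 + 0 * deriv (deriv (deriv f)) 0)) * v1 0 +
          (deriv f 0 + 0 * deriv (deriv f) 0) * v2 0)) +
       (((deriv (deriv f) 0 + (1 * deriv (deriv f) 0 + 0 * deriv (deriv (deriv f)) 0)) * v1 0 +
          (deriv f 0 + 0 * deriv (deriv f) 0) * v2 0) +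
        ((1 * deriv f 0 + 0 * deriv (deriv f) 0) * v2 0 + (0 * deriv f 0) * deriv v2 0))) 0 :=
    (hT1.add hT2).add (hT2.add hT3)
  have eqB : deriv (deriv (deriv f)) 0 =
      3 * deriv (deriv (deriv f)) 0 * v 0 + 6 * (deriv (deriv f) 0 * v1 0) +
        3 * (deriv f 0 * v2 0) := by
    have h1 : deriv (deriv (deriv f)) 0 =
        deriv (fun y => ((2 * deriv (deriv f) y + y * deriv (deriv (deriv f)) y) * v y +
          (deriv f y + y * deriv (deriv f) y) * v1 y) +
        ((deriv f y + y * deriv (deriv f) y) * v1 y + (y * deriv f y) * v2 y)) 0 :=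
      derivCongrOn isOpen_ball (fun y hy => E2 y hy) h0
    refine h1.trans ?_
    rw [hR.deriv]; ring
  have eqA : deriv (deriv f) 0 = 2 * deriv (deriv f) 0 * v 0 + 2 * (deriv f 0 * v1 0) := by
    have := E2 0 h0
    simp only [zero_mul, mul_zero, add_zero, zero_add] at this
    linear_combination this
  -- derivatives of v at 0
  have Ev1 : ∀ z ∈ ball (0:ℂ) 1, v1 z = -(deriv w z / (1 + w z)) := by
    intro z hz
    have hlog : HasDerivAt (fun y => Complex.log (1 + w y)) (deriv w z / (1 + w z)) z := by
      have h1 : HasDerivAt (fun y => 1 + w y) (deriv w z) z := (Hw z hz).const_add 1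
      exact h1.clog (hslit z hz)
    have hV : HasDerivAt v (-(deriv w z / (1 + w z))) z := by
      rw [hv_def]; exact hlog.const_sub 1
    rw [hv1_def]
    exact hV.deriv
  have hv1z : v1 0 = -(deriv w 0) := by
    have := Ev1 0 h0
    rw [hw0] at this
    simpa using this
  have hv2z : v2 0 = deriv w 0 * deriv w 0 - deriv (deriv w) 0 := by
    have hdiv : HasDerivAt (fun y => deriv w y / (1 + w y))
        ((deriv (deriv w) 0 * (1 + w 0) - deriv w 0 * deriv w 0) / (1 + w 0) ^ 2) 0 :=
      (Hw1 0 h0).div ((Hw 0 h0).const_add 1) (by rw [hw0]; norm_num)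
    have hRv : HasDerivAt (fun y => -(deriv w y / (1 + w y)))
        (-((deriv (deriv w) 0 * (1 + w 0) - deriv w 0 * deriv w 0) / (1 + w 0) ^ 2)) 0 := hdiv.neg
    have h1 : v2 0 = deriv (fun y => -(deriv w y / (1 + w y))) 0 := by
      rw [hv2_def]
      exact derivCongrOn isOpen_ball (fun y hy => Ev1 y hy) h0
    rw [h1, hRv.deriv, hw0]
    field_simp
    ring
  -- coefficient identities
  have equ1 : deriv (deriv f) 0 = 2 * deriv w 0 := by
    rw [hvz, hu0, hv1z] at eqA
    linear_combination -eqA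
  have equ2 : deriv (deriv (deriv f)) 0 =
      (9 * deriv w 0 ^ 2 + 3 * deriv (deriv w) 0) / 2 := by
    rw [hvz, hu0, hv1z, hv2z, equ1] at eqB
    linear_combination -eqB / 2
  -- dslope of w, Schwarz–Pick
  have hgdOn : DifferentiableOn ℂ (dslope w 0) (ball (0:ℂ) 1) :=
    (Complex.differentiableOn_dslope (isOpen_ball.mem_nhds h0)).mpr hwd
  have hmapsw : MapsTo w (ball (0:ℂ) 1) (ball (w 0) 1) := by
    intro z hz
    rw [hw0, mem_ball, dist_zero_right]
    exact hwb z hz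
  have hgb : ∀ z ∈ ball (0:ℂ) 1, ‖dslope w 0 z‖ ≤ 1 := by
    intro z hz
    have := Complex.norm_dslope_le_div_of_mapsTo_ball hwd (hmapsw.mono_right ball_subset_closedBall) hz
    simpa using this
  have hgg0 : dslope w 0 0 = deriv w 0 := dslope_same w 0
  have hwz : ∀ z : ℂ, w z = z * dslope w 0 z := by
    intro z
    have h1 := sub_smul_dslope w 0 z
    rw [hw0] at h1
    simpa [smul_eq_mul] using h1.symm
  have hgga : AnalyticOnNhd ℂ (dslope w 0) (ball (0:ℂ) 1) := hgdOn.analyticOnNhd isOpen_ball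
  have Hgg : ∀ z ∈ ball (0:ℂ) 1, HasDerivAt (dslope w 0) (deriv (dslope w 0) z) z :=
    fun z hz => ((hgga z hz).differentiableAt).hasDerivAt
  have Hgg1 : ∀ z ∈ ball (0:ℂ) 1,
      HasDerivAt (deriv (dslope w 0)) (deriv (deriv (dslope w 0)) z) z :=
    fun z hz => ((hgga.deriv z hz).differentiableAt).hasDerivAt
  have Ew1 : ∀ z ∈ ball (0:ℂ) 1,
      deriv w z = dslope w 0 z + z * deriv (dslope w 0) z := by
    intro z hz
    have hW : HasDerivAt (fun y => y * dslope w 0 y)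
        (1 * dslope w 0 z + z * deriv (dslope w 0) z) z := (hasDerivAt_id z).mul (Hgg z hz)
    have h1 : deriv w z = deriv (fun y => y * dslope w 0 y) z :=
      derivCongrOn isOpen_ball (fun y _ => hwz y) hz
    refine h1.trans ?_
    rw [hW.deriv]; ring
  have hw2z : deriv (deriv w) 0 = 2 * deriv (dslope w 0) 0 := by
    have hW2 : HasDerivAt (fun y => dslope w 0 y + y * deriv (dslope w 0) y)
        (deriv (dslope w 0) 0 + (1 * deriv (dslope w 0) 0 + 0 * deriv (deriv (dslope w 0)) 0)) 0 :=
      (Hgg 0 h0).add ((hasDerivAt_id 0).mul (Hgg1 0 h0))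
    have h1 : deriv (deriv w) 0 = deriv (fun y => dslope w 0 y + y * deriv (dslope w 0) y) 0 :=
      derivCongrOn isOpen_ball (fun y hy => Ew1 y hy) h0
    refine h1.trans ?_
    rw [hW2.deriv]; ring
  have hsp : ‖deriv (dslope w 0) 0‖ ≤ 1 - ‖dslope w 0 0‖ ^ 2 :=
    schwarz_pick hgdOn hgb
  -- assemble Taylor coefficients
  have hit2 : iteratedDeriv 2 f 0 = deriv (deriv f) 0 := by
    rw [show (2:ℕ) = 0 + 1 + 1 from rfl, iteratedDeriv_succ, iteratedDeriv_succ,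
      iteratedDeriv_zero]
  have hit3 : iteratedDeriv 3 f 0 = deriv (deriv (deriv f)) 0 := by
    rw [show (3:ℕ) = 0 + 1 + 1 + 1 from rfl, iteratedDeriv_succ, iteratedDeriv_succ,
      iteratedDeriv_succ, iteratedDeriv_zero]
  have ha2 : taylorCoeff f 2 = deriv w 0 := by
    rw [taylorCoeff, hit2, equ1]
    norm_num [Nat.factorial]
  have ha3 : taylorCoeff f 3 = (3 * deriv w 0 ^ 2 + deriv (deriv w) 0) / 4 := by
    rw [taylorCoeff, hit3, equ2]
    norm_num [Nat.factorial]
    ring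
  -- final numeric estimate
  have hc1le : ‖deriv w 0‖ ≤ 1 := by
    rw [← hgg0]; exact hgb 0 h0
  have hDle : ‖deriv (deriv w) 0‖ ≤ 2 * (1 - ‖deriv w 0‖ ^ 2) := by
    rw [hw2z, norm_mul]
    have h2 : ‖(2:ℂ)‖ = 2 := by norm_num
    rw [h2, ← hgg0]
    nlinarith [hsp, norm_nonneg (dslope w 0 0)]
  rw [ha2, ha3]
  set c1 := deriv w 0
  set d := deriv (deriv w) 0
  have htri : ‖c1 ^ 2 - ((3 * c1 ^ 2 + d) / 4) ^ 2‖ ≤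
      ‖c1 ^ 2‖ + ‖((3 * c1 ^ 2 + d) / 4) ^ 2‖ := by
    have := norm_add_le (c1 ^ 2) (-(((3 * c1 ^ 2 + d) / 4) ^ 2))
    rwa [← sub_eq_add_neg, norm_neg] at this
  have h1 : ‖c1 ^ 2‖ = ‖c1‖ ^ 2 := norm_pow _ _
  have h2 : ‖((3 * c1 ^ 2 + d) / 4) ^ 2‖ = (‖3 * c1 ^ 2 + d‖ / 4) ^ 2 := by
    rw [norm_pow, norm_div]
    norm_num
  have h3 : ‖3 * c1 ^ 2 + d‖ ≤ 3 * ‖c1‖ ^ 2 + ‖d‖ := by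
    calc ‖3 * c1 ^ 2 + d‖ ≤ ‖3 * c1 ^ 2‖ + ‖d‖ :=
          norm_add_le _ _
      _ = 3 * ‖c1‖ ^ 2 + ‖d‖ := by
          rw [norm_mul, norm_pow]; norm_num
  have ht0 : 0 ≤ ‖c1‖ := norm_nonneg _
  have hD0 : 0 ≤ ‖d‖ := norm_nonneg _
  have hstep : ‖c1 ^ 2 - ((3 * c1 ^ 2 + d) / 4) ^ 2‖
      ≤ ‖c1‖ ^ 2 + (‖3 * c1 ^ 2 + d‖ / 4) ^ 2 := by
    rw [← h1, ← h2]; exact htri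
  have hA0 : 0 ≤ ‖3 * c1 ^ 2 + d‖ := norm_nonneg _
  have hAle : ‖3 * c1 ^ 2 + d‖ ≤ ‖c1‖ ^ 2 + 2 := by nlinarith [h3, hDle]
  have hsq : ‖3 * c1 ^ 2 + d‖ * ‖3 * c1 ^ 2 + d‖ ≤
      (‖c1‖ ^ 2 + 2) * (‖c1‖ ^ 2 + 2) := mul_self_le_mul_self hA0 hAle
  have ht1 : ‖c1‖ * ‖c1‖ ≤ 1 := by nlinarith [mul_self_le_mul_self ht0 hc1le]
  have hfin : ‖c1‖ ^ 2 + (‖3 * c1 ^ 2 + d‖ / 4) ^ 2 ≤ 25 / 16 := by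
    nlinarith [hsq, ht1, ht0, hA0, sq_nonneg (‖c1‖)]
  linarith
end
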